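/- arXiv:2305.15784 — 5 statements merged into one kernel-verified Lean document; each statement's English description precedes it below -/
import Mathlib

section
/- Let n ≥ 1 and N = 2^n, and let k be an integer. The (k mod N)-monomial minimal solution of (E_N) is irreducible if and only if one of the following holds: k is odd; k ≡ 2^{n−1} (mod N); or n ≥ 2 and k = 2a for some odd integer a. Moreover, if n ≥ 3, the number of elements k ∈ Z/NZ for which the k-monomial minimal solution of (E_N) is irreducible equals 3·2^{n−2} + 1. -/
open Matrix

/-- The elementary matrix `[[a, -1], [1, 0]]` over `ZMod N`. -/
def genMat {N : ℕ} (a : ZMod N) : Matrix (Fin 2) (Fin 2) (ZMod N) :=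
  !![a, -1; 1, 0]

/-- `Mword [a₁, …, aₙ]` is the matrix `Mₙ(a₁, …, aₙ) = genMat aₙ * ⋯ * genMat a₁`. -/
def Mword {N : ℕ} (l : List (ZMod N)) : Matrix (Fin 2) (Fin 2) (ZMod N) :=
  (l.reverse.map genMat).prod

/-- A tuple (encoded as a list) is a solution of `(E_N)` if its matrix is `±Id`. -/
def IsSolutionE {N : ℕ} (l : List (ZMod N)) : Prop :=
  Mword l = 1 ∨ Mword l = -1

/-- The size of the `k`-monomial minimal solution of `(E_N)`: the least positive `n`
such that the constant `n`-tuple `(k, …, k)` is a solution of `(E_N)`. -/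
noncomputable def monomialSize (N : ℕ) (k : ZMod N) : ℕ :=
  sInf {n : ℕ | 0 < n ∧ IsSolutionE (List.replicate n k)}

/-- The `k`-monomial minimal solution of `(E_N)`. -/
noncomputable def monoSol (N : ℕ) (k : ZMod N) : List (ZMod N) :=
  List.replicate (monomialSize N k) k

/-- The sum `⊕` of two tuples:
`(a₁,…,aₘ) ⊕ (b₁,…,bₗ) = (a₁+bₗ, a₂, …, aₘ₋₁, aₘ+b₁, b₂, …, bₗ₋₁)`. -/
def oplus {N : ℕ} (a b : List (ZMod N)) : List (ZMod N) :=
  (a.headD 0 + b.getLastD 0) ::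
    ((a.drop 1).dropLast ++ (a.getLastD 0 + b.headD 0) :: (b.drop 1).dropLast)

/-- Two tuples are equivalent (`∼`) if one is obtained from the other by a cyclic
permutation, possibly composed with order reversal. -/
def TupEquiv {N : ℕ} (c d : List (ZMod N)) : Prop :=
  (∃ i, d = c.rotate i) ∨ (∃ i, d = c.reverse.rotate i)

/-- A tuple is reducible if it is equivalent to a sum `a ⊕ b` where `b` is a solution of
`(E_N)` and both `a`, `b` have length at least `3`. -/
def IsReducibleE {N : ℕ} (c : List (ZMod N)) : Prop :=
  ∃ a b : List (ZMod N), 3 ≤ a.length ∧ 3 ≤ b.length ∧ IsSolutionE b ∧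
    TupEquiv c (oplus a b)

/-- An irreducible solution of `(E_N)`: a solution of size at least `3` that is not
reducible (the solution `(0,0)` is not considered irreducible). -/
def IsIrreducibleE {N : ℕ} (c : List (ZMod N)) : Prop :=
  IsSolutionE c ∧ 3 ≤ c.length ∧ ¬ IsReducibleE c

/-- A reducible solution of `(E_N)`: a solution that is not irreducible. -/
def IsReducibleSol {N : ℕ} (c : List (ZMod N)) : Prop :=
  IsSolutionE c ∧ ¬ IsIrreducibleE c

/-- `N` is monomially irreducible if for every nonzero `k ∈ ZMod N` the `k`-monomial
minimal solution of `(E_N)` is irreducible. -/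
def MonomiallyIrreducible (N : ℕ) : Prop :=
  ∀ k : ZMod N, k ≠ 0 → IsIrreducibleE (monoSol N k)

/-- `N` is quasi monomially irreducible if for every integer `k` coprime to `N` the
`(k mod N)`-monomial minimal solution of `(E_N)` is irreducible. -/
def QuasiMonomiallyIrreducible (N : ℕ) : Prop :=
  ∀ k : ℤ, Int.gcd k (N : ℤ) = 1 → IsIrreducibleE (monoSol N (k : ZMod N))

/-- `N` is semi monomially irreducible: if `N` is even but not divisible by `4`, this
requires that for every integer `a` coprime to `N/2` the `(2a mod N)`-monomial minimal
solution of `(E_N)` is irreducible; otherwise (i.e. `N` odd or divisible by `4`), it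
requires the same for every integer `a` coprime to `N`. -/
def SemiMonomiallyIrreducible (N : ℕ) : Prop :=
  if 2 ∣ N ∧ ¬ (4 ∣ N) then
    ∀ a : ℤ, Int.gcd a ((N / 2 : ℕ) : ℤ) = 1 →
      IsIrreducibleE (monoSol N ((2 * a : ℤ) : ZMod N))
  else
    ∀ a : ℤ, Int.gcd a (N : ℤ) = 1 →
      IsIrreducibleE (monoSol N ((2 * a : ℤ) : ZMod N))


namespace Stmt11


/-- integer Chebyshev-like sequence -/
def C (K : ℤ) : ℕ → ℤ
  | 0 => 0
  | 1 => 1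
  | (j+2) => K * C K (j+1) - C K j

def T (K : ℤ) : ℕ → ℤ
  | 0 => 2
  | 1 => K
  | (j+2) => K * T K (j+1) - T K j

variable {K : ℤ}

@[simp] lemma C_zero : C K 0 = 0 := rfl
@[simp] lemma C_one : C K 1 = 1 := rfl
lemma C_rec (j : ℕ) : C K (j+2) = K * C K (j+1) - C K j := rfl
@[simp] lemma T_zero : T K 0 = 2 := rfl
@[simp] lemma T_one : T K 1 = K := rfl
lemma T_rec (j : ℕ) : T K (j+2) = K * T K (j+1) - T K j := rfl

@[simp] lemma C_two : C K 2 = K := by simp [C_rec]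

/-- addition formula -/
lemma C_add (m n : ℕ) : C K (m + n + 1) = C K (m+1) * C K (n+1) - C K m * C K n := by
  induction m using Nat.twoStepInduction generalizing n with
  | zero => simp
  | one => rw [show 1+n+1 = n+2 from by ring, C_rec]; simp
  | more m ih1 ih2 =>
    have h2 := ih2 n
    rw [show m + 1 + n + 1 = (m + n + 1) + 1 from by ring] at h2
    rw [show m + 2 + n + 1 = (m + n + 1) + 2 from by ring, C_rec,
      show m + 2 + 1 = (m+1) + 2 from by ring]
    linear_combination K * h2 - ih1 n - C K (n+1) * (C_rec (K:=K) (m+1)) + C K n * (C_rec (K:=K) m)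

/-- determinant identity -/
lemma C_det (j : ℕ) : C K (j+1) * C K (j+1) - C K (j+2) * C K j = 1 := by
  induction j with
  | zero => simp
  | succ j ih =>
    rw [show j+1+2 = (j+1)+2 from rfl, C_rec (j+1), show j+1+1 = j+2 from by ring]
    linear_combination ih + C K (j+2) * (C_rec (K:=K) j)

lemma T_eq (i : ℕ) : T K (i+1) = C K (i+2) - C K i := by
  induction i using Nat.twoStepInduction with
  | zero => simp
  | one =>
    show T K 2 = C K 3 - C K 1
    rw [show (2:ℕ) = 0+2 from rfl, T_rec, show (3:ℕ) = 1+2 from rfl, C_rec]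
    simp; ring
  | more i ih1 ih2 =>
    rw [T_rec, ih1, ih2, C_rec (i+2), C_rec (i+1), C_rec i]; ring

lemma C_odd_sub_one (i : ℕ) : C K (2*i+1) - 1 = C K i * T K (i+1) := by
  have h1 : C K (2*i+1) = C K (i+1) * C K (i+1) - C K i * C K i := by
    have := C_add (K := K) i i; rw [show i + i + 1 = 2*i+1 from by ring] at this; linarith
  rw [h1, T_eq]
  linear_combination C_det (K := K) i

lemma C_odd_add_one (i : ℕ) : C K (2*i+1) + 1 = C K (i+1) * T K i := by
  cases i with
  | zero => simp
  | succ i =>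
    have h1 : C K (2*(i+1)+1) = C K (i+2) * C K (i+2) - C K (i+1) * C K (i+1) := by
      have := C_add (K := K) (i+1) (i+1)
      rw [show i + 1 + (i+1) + 1 = 2*(i+1)+1 from by ring] at this; linarith
    rw [h1, T_eq]
    linear_combination - C_det (K := K) i

lemma C_even (i : ℕ) : C K (2*(i+1)) = C K (i+1) * T K (i+1) := by
  have := C_add (K := K) (i+1) i
  rw [show i + 1 + i + 1 = 2*(i+1) from by ring] at this
  rw [this, T_eq]; ring


/-! ### parity and valuation lemmas -/

lemma C_parity (hK : Even K) : ∀ j, (Even (C K j) ↔ Even j) := by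
  intro j
  induction j using Nat.twoStepInduction with
  | zero => simp
  | one => simp [Int.even_iff, Int.odd_iff]
  | more j ih1 ih2 =>
    rw [C_rec]
    constructor
    · intro h2
      have he : Even (K * C K (j+1)) := hK.mul_right _
      have : Even (C K j) := by
        rcases he with ⟨t, ht⟩; rcases h2 with ⟨w, hw⟩; exact ⟨t - w, by linarith⟩
      rcases ih1.mp this with ⟨t, ht⟩
      exact ⟨t+1, by omega⟩
    · intro h2
      have : Even (C K j) := by
        rcases h2 with ⟨t, ht⟩
        exact ih1.mpr ⟨t-1, by omega⟩
      exact (hK.mul_right _).sub this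

lemma C_odd_of_odd (hK : Even K) {j : ℕ} (hj : Odd j) : Odd (C K j) := by
  rw [← Int.not_even_iff_odd]
  rw [← Nat.not_even_iff_odd] at hj
  exact fun h => hj ((C_parity hK j).mp h)

lemma T_even (hK : Even K) : ∀ j, Even (T K j) := by
  intro j
  induction j using Nat.twoStepInduction with
  | zero => exact ⟨1, rfl⟩
  | one => exact hK
  | more j ih1 ih2 => rw [T_rec]; exact (hK.mul_right _).sub ih1

section val
variable {m : ℕ} {u : ℤ} (hm : 1 ≤ m) (hu : Odd u) (hK : K = 2^m * u)
include hm hu hK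

lemma pow_split : (2:ℤ)^m = 2 * 2^(m-1) := by
  rw [← pow_succ']; congr 1; omega

lemma K_even : Even K := by
  refine ⟨2^(m-1) * u, ?_⟩
  rw [hK, pow_split hm hu hK]; ring

lemma T_skip (j : ℕ) : (2:ℤ)^(m+1) ∣ T K (j+2) + T K j := by
  have h : T K (j+2) + T K j = K * T K (j+1) := by rw [T_rec]; ring
  rcases T_even (K_even hm hu hK) (j+1) with ⟨t, ht⟩
  exact ⟨u * t, by rw [h, ht, hK, pow_succ]; ring⟩

lemma T_even_val : ∀ i, ∃ w, Odd w ∧ T K (2*i) = 2*w := by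
  intro i
  induction i with
  | zero => exact ⟨1, ⟨0, rfl⟩, rfl⟩
  | succ i ih =>
    rcases ih with ⟨w, hw, hTw⟩
    rcases T_skip hm hu hK (2*i) with ⟨z, hz⟩
    refine ⟨2^m * z - w, ?_, ?_⟩
    · rcases hw with ⟨t, ht⟩
      refine ⟨2^(m-1) * z - t - 1, ?_⟩
      rw [pow_split hm hu hK, ht]; ring
    · have : T K (2*(i+1)) = 2^(m+1) * z - T K (2*i) := by
        rw [show 2*(i+1) = 2*i+2 from by ring] at *; linarith
      rw [this, hTw, pow_succ]; ring
  
lemma T_odd_val : ∀ i, ∃ w, Odd w ∧ T K (2*i+1) = 2^m * w := by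
  intro i
  induction i with
  | zero => exact ⟨u, hu, by simpa using hK⟩
  | succ i ih =>
    rcases ih with ⟨w, hw, hTw⟩
    rcases T_skip hm hu hK (2*i+1) with ⟨z, hz⟩
    refine ⟨2*z - w, ?_, ?_⟩
    · rcases hw with ⟨t, ht⟩; exact ⟨z - t - 1, by rw [ht]; ring⟩
    · have : T K (2*(i+1)+1) = 2^(m+1) * z - T K (2*i+1) := by
        rw [show 2*(i+1)+1 = (2*i+1)+2 from by ring] at *; linarith
      rw [this, hTw, pow_succ]; ring

lemma T_val_odd_idx {j : ℕ} (hj : Odd j) : ∃ w, Odd w ∧ T K j = 2^m * w := by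
  rcases hj with ⟨i, rfl⟩; exact T_odd_val hm hu hK i

lemma T_val_even_idx {j : ℕ} (hj : Even j) : ∃ w, Odd w ∧ T K j = 2*w := by
  rcases hj with ⟨i, rfl⟩; rw [show i + i = 2*i from by ring]; exact T_even_val hm hu hK i

lemma C_pow_val : ∀ r (w : ℕ), Odd w → ∃ v, Odd v ∧ C K (2^(r+1) * w) = 2^(m+r) * v := by
  intro r
  induction r with
  | zero =>
    intro w hw
    rcases hw with ⟨i, rfl⟩
    have h1 : C K (2^1 * (2*i+1)) = C K (2*i+1) * T K (2*i+1) := by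
      rw [show 2^1 * (2*i+1) = 2*((2*i)+1) from by ring]
      exact C_even (2*i)
    rcases T_odd_val hm hu hK i with ⟨w, hw, hTw⟩
    have hodd : Odd (C K (2*i+1)) := C_odd_of_odd (K_even hm hu hK) ⟨i, by ring⟩
    refine ⟨C K (2*i+1) * w, hodd.mul hw, ?_⟩
    rw [h1, hTw]; simp; ring
  | succ r ih =>
    intro w hw
    rcases ih w hw with ⟨v, hv, hCv⟩
    have hw1 : 1 ≤ w := hw.pos
    have hpos : 1 ≤ 2^(r+1) * w := Nat.one_le_iff_ne_zero.mpr (by positivity)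
    have h1 : C K (2^(r+2) * w) = C K (2^(r+1) * w) * T K (2^(r+1)*w) := by
      rw [show 2^(r+2) * w = 2 * ((2^(r+1)*w - 1) + 1) from by
        have : 2^(r+2) * w = 2 * (2^(r+1) * w) := by ring
        omega]
      rw [C_even]
      congr 2 <;> omega
    have heven : Even (2^(r+1) * w) := ⟨2^r * w, by ring⟩
    rcases T_val_even_idx hm hu hK heven with ⟨w', hw', hTw'⟩
    refine ⟨v * w', hv.mul hw', ?_⟩
    rw [h1, hCv, hTw', show m+(r+1) = (m+r)+1 from by ring, pow_succ]; ring

end val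

section Mat
variable {N : ℕ} (K : ℤ)

/-- cast of C into ZMod N -/
noncomputable def cc (j : ℕ) : ZMod N := ((C K j : ℤ) : ZMod N)

lemma cc_zero : cc (N := N) K 0 = 0 := by simp [cc]
lemma cc_one : cc (N := N) K 1 = 1 := by simp [cc]
lemma cc_two : cc (N := N) K 2 = (K : ZMod N) := by simp [cc]
lemma cc_rec (j : ℕ) : cc (N := N) K (j+2) = (K : ZMod N) * cc K (j+1) - cc K j := by
  simp only [cc, C_rec]; push_cast; ring

lemma mat_one : (1 : Matrix (Fin 2) (Fin 2) (ZMod N)) = !![1,0;0,1] := Matrix.one_fin_two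

lemma mat_neg_one : (-1 : Matrix (Fin 2) (Fin 2) (ZMod N)) = !![-1,0;0,-1] := by
  have : (-1 : Matrix (Fin 2) (Fin 2) (ZMod N)) = -(!![1,0;0,1]) := by rw [← mat_one]
  rw [this]
  ext i j; fin_cases i <;> fin_cases j <;> simp [Matrix.neg_apply]

lemma mat_eq_iff (a b c d a' b' c' d' : ZMod N) :
    !![a,b;c,d] = !![a',b';c',d'] ↔ (a = a' ∧ b = b' ∧ c = c' ∧ d = d') := by
  constructor
  · intro h
    exact ⟨congrFun (congrFun h 0) 0, congrFun (congrFun h 0) 1,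
      congrFun (congrFun h 1) 0, congrFun (congrFun h 1) 1⟩
  · rintro ⟨rfl, rfl, rfl, rfl⟩; rfl

/-- representation of powers of genMat -/
lemma genMat_pow (j : ℕ) :
    genMat ((K : ZMod N)) ^ (j+1) = !![cc K (j+2), -cc K (j+1); cc K (j+1), -cc K j] := by
  induction j with
  | zero =>
    rw [pow_one, genMat, cc_two, cc_one, cc_zero]
    norm_num
  | succ j ih =>
    rw [pow_succ, ih, genMat, Matrix.mul_fin_two, mat_eq_iff]
    refine ⟨?_, ?_, ?_, ?_⟩
    · rw [cc_rec K (j+1)]; ring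
    · rw [show j+1+1 = j+2 from rfl, cc_rec K j]; ring
    · rw [cc_rec K j]; ring
    · ring

lemma Mword_replicate (k : ZMod N) (j : ℕ) :
    Mword (List.replicate j k) = genMat k ^ j := by
  rw [Mword, List.reverse_replicate, List.map_replicate, List.prod_replicate]

lemma Mword_sandwich (x y : ZMod N) (mid : List (ZMod N)) :
    Mword (x :: (mid ++ [y])) = genMat y * (Mword mid * genMat x) := by
  simp [Mword, List.reverse_cons, List.reverse_append]

lemma genMat_det (k : ZMod N) : (genMat k).det = 1 := by
  rw [genMat, Matrix.det_fin_two_of]; ring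

lemma genMat_isUnit (k : ZMod N) : IsUnit (genMat k) := by
  rw [Matrix.isUnit_iff_isUnit_det, genMat_det]; exact isUnit_one

lemma exists_pow_eq_one [NeZero N] (k : ZMod N) : ∃ d, 0 < d ∧ genMat k ^ d = 1 := by
  have h := genMat_isUnit k
  refine ⟨orderOf h.unit, orderOf_pos h.unit, ?_⟩
  have h2 := congrArg (Units.val) (pow_orderOf_eq_one h.unit)
  rw [Units.val_pow_eq_pow_val, h.unit_spec, Units.val_one] at h2
  exact h2

/-- membership in the solution set -/
lemma size_set_nonempty [NeZero N] (k : ZMod N) :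
    {j : ℕ | 0 < j ∧ IsSolutionE (List.replicate j k)}.Nonempty := by
  obtain ⟨d, hd, hpow⟩ := exists_pow_eq_one (N := N) k
  exact ⟨d, hd, Or.inl (by rw [Mword_replicate]; exact hpow)⟩

lemma size_mem [NeZero N] (k : ZMod N) :
    0 < monomialSize N k ∧ IsSolutionE (List.replicate (monomialSize N k) k) :=
  Nat.sInf_mem (size_set_nonempty k)

lemma size_le [NeZero N] {k : ZMod N} {j : ℕ} (h1 : 0 < j)
    (h2 : IsSolutionE (List.replicate j k)) : monomialSize N k ≤ j :=
  Nat.sInf_le ⟨h1, h2⟩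

/-- extraction: power equal to ±1 forces cc j = 0 -/
lemma pow_pm_one {j : ℕ} (h : genMat ((K : ZMod N)) ^ (j+1) = 1 ∨ genMat ((K : ZMod N)) ^ (j+1) = -1) :
    cc K (j+1) = (0 : ZMod N) := by
  rw [genMat_pow, mat_one] at h
  rw [show -(!![1,0;0,1] : Matrix (Fin 2) (Fin 2) (ZMod N)) = !![-1,0;0,-1] from by
    rw [← mat_one, mat_neg_one]] at h
  rcases h with h | h <;> rw [mat_eq_iff] at h <;> exact h.2.2.1

lemma sol_imp {j : ℕ} (h : IsSolutionE (List.replicate (j+1) ((K : ZMod N)))) :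
    cc K (j+1) = (0 : ZMod N) := by
  rw [IsSolutionE, Mword_replicate] at h
  exact pow_pm_one K h

end Mat

end Stmt11

namespace Stmt11
section Red
variable {N : ℕ} (K : ℤ)

lemma cc_det (i : ℕ) : cc K (i+1) * cc K (i+1) - cc K (i+2) * cc (N := N) K i = 1 := by
  have h := congrArg (fun z : ℤ => (z : ZMod N)) (C_det (K := K) i)
  push_cast at h
  exact h

lemma list_decomp {α : Type*} (l : List α) (d : α) (h : 2 ≤ l.length) :
    l = l.headD d :: ((l.drop 1).dropLast ++ [l.getLastD d]) := by
  match l, h with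
  | (x :: y :: t), _ =>
    simp only [List.headD_cons, List.drop_one, List.tail_cons]
    have h2 : (y :: t) ≠ [] := by simp
    conv_lhs => rw [← List.dropLast_append_getLast h2]
    simp [List.getLastD_eq_getLast?, List.getLast?_eq_getLast h2]

lemma prod3 (x y A B Q : ZMod N) :
    genMat y * (!![A, -B; B, -Q] * genMat x)
      = !![y*(A*x-B) - (B*x-Q), B - y*A; A*x-B, -A] := by
  rw [genMat, genMat, Matrix.mul_fin_two, Matrix.mul_fin_two, mat_eq_iff]
  refine ⟨by ring, by ring, by ring, by ring⟩

lemma oplus_length {a b : List (ZMod N)} (ha : 3 ≤ a.length) (hb : 3 ≤ b.length) :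
    (oplus a b).length = a.length + b.length - 2 := by
  rw [oplus]
  simp only [List.length_cons, List.length_append, List.length_dropLast, List.length_drop]
  omega

lemma reducible_extract {s : ℕ}
    (h : IsReducibleE (List.replicate s ((K : ZMod N)))) :
    ∃ j, 1 ≤ j ∧ j + 3 ≤ s ∧ (cc K (j+1) = (1 : ZMod N) ∨ cc K (j+1) = (-1 : ZMod N)) := by
  obtain ⟨a, b, ha, hb, hbsol, hequiv⟩ := h
  have hoab : oplus a b = List.replicate s ((K : ZMod N)) := by
    rcases hequiv with ⟨i, hi⟩ | ⟨i, hi⟩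
    · rw [hi, List.rotate_replicate]
    · rw [hi, List.reverse_replicate, List.rotate_replicate]
  have hb2 : 2 ≤ b.length := le_trans (by norm_num) hb
  have hbdec := list_decomp b 0 hb2
  have hmidlen : ((b.drop 1).dropLast).length = b.length - 2 := by
    simp only [List.length_dropLast, List.length_drop]; omega
  have hmem : ∀ z ∈ (b.drop 1).dropLast, z = ((K : ZMod N)) := by
    intro z hz
    have hz2 : z ∈ oplus a b := by
      rw [oplus]
      simp only [List.mem_cons, List.mem_append]
      tauto
    rw [hoab] at hz2
    exact List.eq_of_mem_replicate hz2
  have hmidrep : (b.drop 1).dropLast = List.replicate (b.length - 2) ((K : ZMod N)) :=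
    List.eq_replicate_iff.mpr ⟨hmidlen, hmem⟩
  have hslen : s = (a.length - 2) + (b.length - 2) + 2 := by
    have := congrArg List.length hoab
    rw [oplus_length ha hb, List.length_replicate] at this
    omega
  obtain ⟨i, hi⟩ : ∃ i, b.length - 2 = i + 1 := ⟨b.length - 3, by omega⟩
  refine ⟨b.length - 2, by omega, by omega, ?_⟩
  rw [hbdec, hmidrep] at hbsol
  rw [IsSolutionE, Mword_sandwich, Mword_replicate, hi, genMat_pow, prod3] at hbsol
  rw [hi]
  rcases hbsol with h1 | h1
  · rw [mat_one, mat_eq_iff] at h1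
    right
    have := h1.2.2.2
    rw [show (i+1)+1 = i+2 from rfl]
    linear_combination -this
  · rw [show -(1 : Matrix (Fin 2) (Fin 2) (ZMod N)) = !![-1,0;0,-1] from mat_neg_one,
      mat_eq_iff] at h1
    left
    have := h1.2.2.2
    rw [show (i+1)+1 = i+2 from rfl]
    linear_combination -this

lemma reducible_construct {s j : ℕ} (h1 : 1 ≤ j) (h2 : j + 3 ≤ s)
    (hC : cc K (j+1) = (1 : ZMod N)) :
    IsReducibleE (List.replicate s ((K : ZMod N))) := by
  set k : ZMod N := ((K : ZMod N)) with hk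
  set p : ZMod N := cc K j with hp
  refine ⟨(k - p) :: (List.replicate (s - j - 2) k ++ [k - p]),
    p :: (List.replicate j k ++ [p]), ?_, ?_, ?_, ?_⟩
  · simp only [List.length_cons, List.length_append, List.length_replicate]; omega
  · simp only [List.length_cons, List.length_append, List.length_replicate]; omega
  · right
    obtain ⟨i, rfl⟩ : ∃ i, j = i + 1 := ⟨j - 1, by omega⟩
    rw [Mword_sandwich, Mword_replicate, genMat_pow, prod3]
    rw [show -(1 : Matrix (Fin 2) (Fin 2) (ZMod N)) = !![-1,0;0,-1] from mat_neg_one,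
      mat_eq_iff]
    have hdet := cc_det (N := N) K i
    rw [show (i+1)+1 = i+2 from rfl] at hC
    rw [hC] at hdet ⊢
    refine ⟨by linear_combination -hdet, by ring, by ring, by ring⟩
  · left
    refine ⟨0, ?_⟩
    rw [List.rotate_zero]
    rw [oplus]
    simp only [List.headD_cons, List.drop_one, List.tail_cons, List.cons_append,
      List.dropLast_concat]
    rw [show ((k - p) :: (List.replicate (s - j - 2) k ++ [k - p]) : List (ZMod N))
        = ((k - p) :: List.replicate (s - j - 2) k) ++ [k - p] from by simp,
      List.getLastD_concat,
      show (p :: (List.replicate j k ++ [p]) : List (ZMod N))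
        = (p :: List.replicate j k) ++ [p] from by simp,
      List.getLastD_concat]
    apply List.eq_replicate_iff.mpr
    constructor
    · simp only [List.length_cons, List.length_append, List.length_replicate]; omega
    · intro z hz
      simp only [List.mem_cons, List.mem_append, List.mem_replicate] at hz
      rcases hz with h | h
      · rw [h]; ring
      · rcases h with h | h
        · exact h.2
        · rcases h with h | h
          · rw [h]; ring
          · exact h.2

end Red
end Stmt11

namespace Stmt11

instance (n : ℕ) : NeZero ((2:ℕ)^n) := ⟨pow_ne_zero n (by norm_num)⟩

section ZModHelp
variable {n : ℕ}

lemma odd_not_dvd {z : ℤ} (hz : Odd z) (hn : 1 ≤ n) : ¬ ((2:ℤ)^n ∣ z) := by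
  intro h
  have h2 : (2:ℤ) ∣ z := dvd_trans (dvd_pow_self 2 (by omega : n ≠ 0)) h
  rcases h2 with ⟨w, rfl⟩; rcases hz with ⟨t, ht⟩; omega

lemma int_cast_eq_zero {z : ℤ} : ((z : ℤ) : ZMod (2^n)) = 0 ↔ (2:ℤ)^n ∣ z := by
  rw [ZMod.intCast_zmod_eq_zero_iff_dvd,
    show ((2^n : ℕ) : ℤ) = (2:ℤ)^n from by push_cast; ring]

lemma odd_cast_unit {z : ℤ} (hz : Odd z) : IsUnit ((z : ZMod (2^n))) := by
  have h1 : IsCoprime (z : ℤ) ((2:ℤ)^n) := by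
    apply IsCoprime.pow_right
    rw [Int.isCoprime_iff_gcd_eq_one]
    show Nat.gcd z.natAbs (Int.natAbs 2) = 1
    exact Nat.coprime_two_right.mpr (Int.natAbs_odd.mpr hz)
  obtain ⟨a, b, hab⟩ := h1
  apply IsUnit.of_mul_eq_one ((a : ZMod (2^n)))
  have := congrArg (fun t : ℤ => (t : ZMod (2^n))) hab
  push_cast at this
  rw [show ((2:ZMod (2^n)))^n = ((2^n : ℕ) : ZMod (2^n)) by push_cast; ring,
    ZMod.natCast_self] at this
  rw [mul_comm] at this
  simpa using this

lemma odd_cast_ne_zero {z : ℤ} (hz : Odd z) (hn : 1 ≤ n) : ((z : ZMod (2^n))) ≠ 0 := by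
  rw [Ne, int_cast_eq_zero]
  exact odd_not_dvd hz hn

lemma pow_mul_odd_not_dvd {a : ℕ} {v : ℤ} (ha : a < n) (hv : Odd v) :
    ¬ ((2:ℤ)^n ∣ 2^a * v) := by
  intro h
  have h1 : (2:ℤ)^(a+1) ∣ 2^a * v := dvd_trans (pow_dvd_pow 2 (by omega)) h
  rw [pow_succ] at h1
  have h2 : (2:ℤ) ∣ v := (mul_dvd_mul_iff_left (pow_ne_zero a (two_ne_zero))).mp h1
  rcases h2 with ⟨w, rfl⟩; rcases hv with ⟨t, ht⟩; omega

lemma pow_mul_odd_dvd_le {a : ℕ} {v : ℤ} (hv : Odd v) (h : (2:ℤ)^n ∣ 2^a * v) :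
    n ≤ a := by
  by_contra hc
  exact pow_mul_odd_not_dvd (by omega) hv h

lemma cast_eq_one_iff {z : ℤ} : ((z : ℤ) : ZMod (2^n)) = 1 ↔ (2:ℤ)^n ∣ z - 1 := by
  rw [← int_cast_eq_zero]
  push_cast
  constructor <;> intro h <;> linear_combination h

lemma cast_eq_neg_one_iff {z : ℤ} : ((z : ℤ) : ZMod (2^n)) = -1 ↔ (2:ℤ)^n ∣ z + 1 := by
  rw [← int_cast_eq_zero]
  push_cast
  constructor <;> intro h <;> linear_combination h

lemma even_cast_ne_pm_one {z : ℤ} (hz : Even z) (hn : 1 ≤ n) :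
    ((z : ZMod (2^n))) ≠ 1 ∧ ((z : ZMod (2^n))) ≠ -1 := by
  constructor
  · rw [Ne, cast_eq_one_iff]
    exact odd_not_dvd (by rcases hz with ⟨t, rfl⟩; exact ⟨t - 1, by ring⟩) hn
  · rw [Ne, cast_eq_neg_one_iff]
    exact odd_not_dvd (by rcases hz with ⟨t, rfl⟩; exact ⟨t, by ring⟩) hn

end ZModHelp

section Size
variable {n : ℕ} (K : ℤ)

lemma size_eq {k : ZMod (2^n)} {s₀ : ℕ} (h0 : 0 < s₀)
    (hmem : IsSolutionE (List.replicate s₀ k))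
    (hmin : ∀ j, 0 < j → j < s₀ → ¬ IsSolutionE (List.replicate j k)) :
    monomialSize (2^n) k = s₀ := by
  have h1 : monomialSize (2^n) k ≤ s₀ := size_le h0 hmem
  have h2 := size_mem (N := 2^n) k
  by_contra hne
  exact hmin _ h2.1 (by omega) h2.2

lemma size_ge_three (hn : 1 ≤ n) (hk : ((K : ZMod (2^n))) ≠ 0) :
    3 ≤ monomialSize (2^n) ((K : ZMod (2^n))) := by
  have h2 := size_mem (N := 2^n) ((K : ZMod (2^n)))
  rcases (by have := h2.1; omega : monomialSize (2^n) ((K : ZMod (2^n))) = 1 ∨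
      monomialSize (2^n) ((K : ZMod (2^n))) = 2 ∨
      3 ≤ monomialSize (2^n) ((K : ZMod (2^n)))) with h | h | h
  · exfalso
    rw [h] at h2
    have := sol_imp (N := 2^n) K (j := 0) h2.2
    rw [cc_one] at this
    have h4 : ((1 : ℤ) : ZMod (2^n)) = 0 := by simpa using this
    rw [int_cast_eq_zero] at h4
    exact odd_not_dvd ⟨0, by ring⟩ hn h4
  · exfalso
    rw [h] at h2
    have := sol_imp (N := 2^n) K (j := 1) h2.2
    rw [cc_two] at this
    exact hk this
  · exact h

/-- solution from cc values -/
lemma sol_of_cc {j : ℕ} (hj0 : cc K (j+1) = (0 : ZMod (2^n))) (hjm : cc K j = (-1 : ZMod (2^n))) :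
    IsSolutionE (List.replicate (j+1) ((K : ZMod (2^n)))) := by
  left
  rw [Mword_replicate, genMat_pow, mat_one, mat_eq_iff, hj0, hjm]
  refine ⟨?_, by ring, rfl, by ring⟩
  rw [cc_rec, hj0, hjm]; ring

end Size

section OddCase
variable {n : ℕ} (K : ℤ)

lemma odd_irreducible (hn : 1 ≤ n) (hK : Odd K) :
    IsIrreducibleE (monoSol (2^n) ((K : ZMod (2^n)))) := by
  set k : ZMod (2^n) := ((K : ZMod (2^n))) with hkdef
  have hk0 : k ≠ 0 := odd_cast_ne_zero hK hn
  have hmem := size_mem (N := 2^n) k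
  have h3 := size_ge_three K hn hk0
  refine ⟨by rw [monoSol]; exact hmem.2, by rw [monoSol, List.length_replicate]; exact h3, ?_⟩
  intro hred
  rw [monoSol] at hred
  obtain ⟨j, hj1, hj3, hcc⟩ := reducible_extract K hred
  obtain ⟨i, rfl⟩ : ∃ i, j = i + 1 := ⟨j - 1, by omega⟩
  obtain ⟨e, he, hA⟩ : ∃ e : ℤ, (e = 1 ∨ e = -1) ∧ cc K (i+2) = ((e : ℤ) : ZMod (2^n)) := by
    rcases hcc with h | h
    · exact ⟨1, Or.inl rfl, by rw [show (i+1)+1 = i+2 from rfl] at h; simpa using h⟩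
    · exact ⟨-1, Or.inr rfl, by rw [show (i+1)+1 = i+2 from rfl] at h; push_cast; simpa using h⟩
  have heodd : Odd e := by rcases he with rfl | rfl; exacts [⟨0, by ring⟩, ⟨-1, by ring⟩]
  have he2 : ((e : ℤ) : ZMod (2^n)) * ((e : ℤ) : ZMod (2^n)) = 1 := by
    rcases he with rfl | rfl <;> push_cast <;> ring
  set p : ZMod (2^n) := cc K (i+1) with hpdef
  have hreci : cc K i = k * p - ((e : ℤ) : ZMod (2^n)) := by
    have hr := cc_rec (N := 2^n) K i
    rw [hA, ← hkdef, ← hpdef] at hr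
    linear_combination hr
  have key : p * (p - ((e : ℤ) : ZMod (2^n)) * k) = 0 := by
    have hdet := cc_det (N := 2^n) K i
    rw [hA, hreci, ← hpdef] at hdet
    linear_combination hdet - he2
  rcases Int.even_or_odd (C K (i+1)) with hpar | hpar
  · -- p even: p - e*k is a unit, so p = 0, solution at i+1
    have hoddz : Odd (C K (i+1) - e * K) := hpar.sub_odd (heodd.mul hK)
    have hu : IsUnit (p - ((e : ℤ) : ZMod (2^n)) * k) := by
      have := odd_cast_unit (n := n) hoddz
      have hcast : (((C K (i+1) - e * K : ℤ)) : ZMod (2^n))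
          = p - ((e : ℤ) : ZMod (2^n)) * k := by
        rw [hpdef, hkdef, cc]; push_cast; ring
      rwa [hcast] at this
    have hp0 : p = 0 := (hu.mul_left_eq_zero).mp key
    have hsol : IsSolutionE (List.replicate (i+1) k) := by
      rcases he with rfl | rfl
      · apply sol_of_cc
        · exact hp0
        · rw [hreci, hp0]; push_cast; ring
      · right
        rw [Mword_replicate, genMat_pow,
          show -(1 : Matrix (Fin 2) (Fin 2) (ZMod (2^n))) = !![-1,0;0,-1] from mat_neg_one,
          mat_eq_iff, hA, ← hpdef, hp0, hreci, hp0]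
        push_cast
        refine ⟨by ring, by ring, by ring, by ring⟩
    have := size_le (by omega) hsol
    omega
  · -- p odd: p is a unit, p = e*k, solution at i+3
    have hu : IsUnit p := by
      have := odd_cast_unit (n := n) hpar
      rwa [show ((C K (i+1) : ℤ) : ZMod (2^n)) = p from rfl] at this
    have hpek : p = ((e : ℤ) : ZMod (2^n)) * k := by
      have h := (hu.mul_right_eq_zero).mp key
      linear_combination h
    have h3c : cc (N := 2^n) K (i+3) = 0 := by
      have := cc_rec (N := 2^n) K (i+1)
      rw [show (i+1)+2 = i+3 from rfl, show (i+1)+1 = i+2 from rfl] at this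
      rw [this, hA, ← hpdef, hpek]
      ring
    have h4c : cc (N := 2^n) K (i+4) = -((e : ℤ) : ZMod (2^n)) := by
      have := cc_rec (N := 2^n) K (i+2)
      rw [show (i+2)+2 = i+4 from rfl, show (i+2)+1 = i+3 from rfl] at this
      rw [this, h3c, hA]
      ring
    have hsol : IsSolutionE (List.replicate (i+3) k) := by
      rcases he with rfl | rfl
      · right
        rw [Mword_replicate, show i+3 = (i+2)+1 from rfl, genMat_pow,
          show -(1 : Matrix (Fin 2) (Fin 2) (ZMod (2^n))) = !![-1,0;0,-1] from mat_neg_one,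
          mat_eq_iff, show (i+2)+2 = i+4 from rfl, show (i+2)+1 = i+3 from rfl,
          h3c, h4c, hA]
        push_cast
        refine ⟨by ring, by ring, by ring, by ring⟩
      · left
        rw [Mword_replicate, show i+3 = (i+2)+1 from rfl, genMat_pow, mat_one,
          mat_eq_iff, show (i+2)+2 = i+4 from rfl, show (i+2)+1 = i+3 from rfl,
          h3c, h4c, hA]
        push_cast
        refine ⟨by ring, by ring, by ring, by ring⟩
    have := size_le (by omega) hsol
    omega

end OddCase
end Stmt11

namespace Stmt11
section EvenCase
variable {n m : ℕ} {u : ℤ}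

lemma cc_s_zero (K : ℤ) (hm : 1 ≤ m) (hmn : m < n) (hu : Odd u) (hKu : K = 2^m * u) :
    cc (N := 2^n) K (2^(n-m+1)) = 0 := by
  obtain ⟨v, hv, hC⟩ := C_pow_val hm hu hKu (n-m) 1 odd_one
  rw [mul_one] at hC
  rw [cc, int_cast_eq_zero]
  exact ⟨v, by rw [hC, show m + (n-m) = n from by omega]⟩

lemma cc_s_pred (K : ℤ) (hm : 1 ≤ m) (hmn : m < n) (hu : Odd u) (hKu : K = 2^m * u) :
    cc (N := 2^n) K (2^(n-m+1) - 1) = (-1 : ZMod (2^n)) := by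
  have hexp : (2:ℕ)^(n-m+1) = 2 * 2^(n-m) := by rw [pow_succ]; ring
  have h2nm : 2 ≤ (2:ℕ)^(n-m) := by
    calc 2 = 2^1 := (pow_one 2).symm
    _ ≤ 2^(n-m) := Nat.pow_le_pow_right (by norm_num) (by omega)
  set i : ℕ := 2^(n-m) - 1 with hi
  have hidx : (2:ℕ)^(n-m+1) - 1 = 2*i + 1 := by omega
  rw [hidx, cc, cast_eq_neg_one_iff]
  obtain ⟨v, hv, hCi⟩ := C_pow_val hm hu hKu (n-m-1) 1 odd_one
  rw [mul_one, show n-m-1+1 = n-m from by omega] at hCi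
  have hexp2 : (2:ℕ)^(n-m) = 2 * 2^(n-m-1) := by rw [← pow_succ']; congr 1; omega
  have hoddi : Odd i := ⟨2^(n-m-1) - 1, by omega⟩
  obtain ⟨w, hw, hT⟩ := T_val_odd_idx hm hu hKu hoddi
  rw [C_odd_add_one i, show i + 1 = 2^(n-m) from by omega, hCi, hT]
  refine ⟨2^(m-1) * (v * w), ?_⟩
  rw [show (2:ℤ)^(m + (n-m-1)) * v * (2^m * w) = (2^(m+(n-m-1)) * 2^m) * (v * w) from by ring,
    ← pow_add, show m + (n-m-1) + m = n + (m-1) from by omega, pow_add]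
  ring

lemma size_even (K : ℤ) (hm : 1 ≤ m) (hmn : m < n) (hu : Odd u) (hKu : K = 2^m * u) :
    monomialSize (2^n) ((K : ZMod (2^n))) = 2^(n-m+1) := by
  have hpos : 0 < (2:ℕ)^(n-m+1) := Nat.pow_pos (by norm_num)
  apply size_eq
  · exact hpos
  · have := sol_of_cc (n := n) K (j := 2^(n-m+1) - 1)
      (by rw [show 2^(n-m+1) - 1 + 1 = 2^(n-m+1) from by omega]
          exact cc_s_zero K hm hmn hu hKu)
      (cc_s_pred K hm hmn hu hKu)
    rwa [show 2^(n-m+1) - 1 + 1 = 2^(n-m+1) from by omega] at this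
  · intro j hj0 hjs hsol
    obtain ⟨j', rfl⟩ : ∃ j', j = j' + 1 := ⟨j - 1, by omega⟩
    have hz := sol_imp (N := 2^n) K hsol
    rw [cc, int_cast_eq_zero] at hz
    rcases Nat.even_or_odd (j'+1) with hpar | hpar
    · obtain ⟨e, w, hw, hjw⟩ := Nat.exists_eq_two_pow_mul_odd
        (show j' + 1 ≠ 0 from by omega)
      obtain ⟨r, rfl⟩ : ∃ r, e = r + 1 := by
        rcases Nat.eq_zero_or_pos e with rfl | he
        · exfalso
          rw [hjw] at hpar
          simp only [pow_zero, one_mul] at hpar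
          exact (Nat.not_even_iff_odd.mpr hw) hpar
        · exact ⟨e - 1, by omega⟩
      obtain ⟨v, hv, hC⟩ := C_pow_val hm hu hKu r w hw
      rw [hjw, hC] at hz
      have hle := pow_mul_odd_dvd_le hv hz
      have hwpos : 1 ≤ w := hw.pos
      have h2r : (2:ℕ)^(r+1) ≤ j' + 1 := by
        calc (2:ℕ)^(r+1) = 2^(r+1) * 1 := by ring
        _ ≤ 2^(r+1) * w := Nat.mul_le_mul_left _ hwpos
        _ = j' + 1 := hjw.symm
      have hlt : (2:ℕ)^(r+1) < 2^(n-m+1) := by omega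
      have hrlt : r + 1 < n - m + 1 := by
        by_contra hc
        exact absurd (Nat.pow_le_pow_right (show 1 ≤ 2 from by norm_num)
          (by omega : n-m+1 ≤ r+1)) (by omega)
      omega
    · exact odd_not_dvd (C_odd_of_odd (K_even hm hu hKu) hpar) (by omega) hz

lemma exclusion_j_odd (K : ℤ) (hn : 1 ≤ n) (hKe : Even K) {j : ℕ} (hj : Odd j) :
    ¬(cc (N := 2^n) K (j+1) = 1 ∨ cc (N := 2^n) K (j+1) = -1) := by
  have hCe : Even (C K (j+1)) := (C_parity hKe (j+1)).mpr
    (by rcases hj with ⟨t, rfl⟩; exact ⟨t+1, by ring⟩)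
  have := even_cast_ne_pm_one (n := n) hCe hn
  rw [cc]
  tauto

lemma C_val_m1 (K : ℤ) (hu : Odd u) (hK1 : K = 2 * u) {i : ℕ} (hi : 1 ≤ i) :
    ∃ (a : ℕ) (v : ℤ), Odd v ∧ C K i = 2^a * v ∧ (2:ℕ)^a ≤ i := by
  have hKu' : K = 2^1 * u := by rw [hK1]; ring
  obtain ⟨e, w, hw, hjw⟩ := Nat.exists_eq_two_pow_mul_odd (show i ≠ 0 from by omega)
  rcases Nat.eq_zero_or_pos e with rfl | he
  · refine ⟨0, C K i, ?_, by ring, by omega⟩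
    apply C_odd_of_odd (K_even (le_refl 1) hu hKu')
    rw [hjw]; simpa using hw
  · obtain ⟨r, rfl⟩ : ∃ r, e = r + 1 := ⟨e - 1, by omega⟩
    obtain ⟨v, hv, hC⟩ := C_pow_val (le_refl 1) hu hKu' r w hw
    refine ⟨r+1, v, hv, by rw [hjw, hC, show (1:ℕ) + r = r + 1 from by omega], ?_⟩
    calc (2:ℕ)^(r+1) = 2^(r+1) * 1 := by ring
    _ ≤ 2^(r+1) * w := Nat.mul_le_mul_left _ hw.pos
    _ = i := hjw.symm

lemma T_val_m1 (K : ℤ) (hu : Odd u) (hK1 : K = 2 * u) (i : ℕ) :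
    ∃ w, Odd w ∧ T K i = 2 * w := by
  have hKu' : K = 2^1 * u := by rw [hK1]; ring
  rcases Nat.even_or_odd i with hp | hp
  · exact T_val_even_idx (le_refl 1) hu hKu' hp
  · obtain ⟨w, hw, hT⟩ := T_val_odd_idx (le_refl 1) hu hKu' hp
    exact ⟨w, hw, by rw [hT]; ring⟩

lemma exclusion_m1 (K : ℤ) (hu : Odd u) (hn2 : 2 ≤ n) (hK1 : K = 2 * u) :
    ∀ j, 1 ≤ j → j + 3 ≤ 2^n →
      ¬(cc (N := 2^n) K (j+1) = 1 ∨ cc (N := 2^n) K (j+1) = -1) := by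
  intro j hj1 hj3
  have h2n : (2:ℕ)^n = 2 * 2^(n-1) := by rw [← pow_succ']; congr 1; omega
  rcases Nat.even_or_odd j with hp | hp
  swap
  · exact exclusion_j_odd K (by omega) (by rw [hK1]; exact ⟨u, by ring⟩) hp
  obtain ⟨i, rfl⟩ : ∃ i, j = 2 * i := by rcases hp with ⟨i, hi⟩; exact ⟨i, by omega⟩
  rintro (h1 | h1)
  · rw [cc, cast_eq_one_iff] at h1
    rw [C_odd_sub_one i] at h1
    obtain ⟨a, v, hv, hCi, hai⟩ := C_val_m1 K hu hK1 (show 1 ≤ i from by omega)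
    obtain ⟨w, hw, hT⟩ := T_val_m1 K hu hK1 (i+1)
    rw [hCi, hT] at h1
    have h2 : (2:ℤ)^n ∣ 2^(a+1) * (v * w) := by
      have heq2 : (2:ℤ)^a * v * (2 * w) = 2^(a+1) * (v * w) := by rw [pow_succ]; ring
      rwa [heq2] at h1
    have hle := pow_mul_odd_dvd_le (hv.mul hw) h2
    have hge : (2:ℕ)^(n-1) ≤ 2^a := Nat.pow_le_pow_right (by norm_num) (by omega)
    omega
  · rw [cc, cast_eq_neg_one_iff] at h1
    rw [C_odd_add_one i] at h1
    obtain ⟨a, v, hv, hCi, hai⟩ := C_val_m1 K hu hK1 (show 1 ≤ i + 1 from by omega)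
    obtain ⟨w, hw, hT⟩ := T_val_m1 K hu hK1 i
    rw [hCi, hT] at h1
    have h2 : (2:ℤ)^n ∣ 2^(a+1) * (v * w) := by
      have heq2 : (2:ℤ)^a * v * (2 * w) = 2^(a+1) * (v * w) := by rw [pow_succ]; ring
      rwa [heq2] at h1
    have hle := pow_mul_odd_dvd_le (hv.mul hw) h2
    have hge : (2:ℕ)^(n-1) ≤ 2^a := Nat.pow_le_pow_right (by norm_num) (by omega)
    omega

lemma irr_of_exclusion (K : ℤ) (hm : 1 ≤ m) (hmn : m < n) (hu : Odd u) (hKu : K = 2^m * u)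
    (hexcl : ∀ j, 1 ≤ j → j + 3 ≤ 2^(n-m+1) →
      ¬(cc (N := 2^n) K (j+1) = 1 ∨ cc (N := 2^n) K (j+1) = -1)) :
    IsIrreducibleE (monoSol (2^n) ((K : ZMod (2^n)))) := by
  have hk0 : ((K : ZMod (2^n))) ≠ 0 := by
    rw [Ne, int_cast_eq_zero, hKu]
    exact pow_mul_odd_not_dvd hmn hu
  have hmem := size_mem (N := 2^n) ((K : ZMod (2^n)))
  have hsz := size_even K hm hmn hu hKu
  have hlen3 : 3 ≤ (2:ℕ)^(n-m+1) := by
    calc 3 ≤ 2^2 := by norm_num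
    _ ≤ 2^(n-m+1) := Nat.pow_le_pow_right (by norm_num) (by omega)
  refine ⟨by rw [monoSol]; exact hmem.2,
    by rw [monoSol, List.length_replicate, hsz]; exact hlen3, ?_⟩
  intro hred
  rw [monoSol] at hred
  obtain ⟨j, hj1, hj3, hcc⟩ := reducible_extract K hred
  rw [hsz] at hj3
  exact hexcl j hj1 (by omega) hcc

lemma m1_irreducible (K : ℤ) (hu : Odd u) (hn2 : 2 ≤ n) (hK1 : K = 2 * u) :
    IsIrreducibleE (monoSol (2^n) ((K : ZMod (2^n)))) := by
  apply irr_of_exclusion K (le_refl 1) (by omega) hu (by rw [hK1]; ring)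
  intro j hj1 hj3 hcc
  have hss : (2:ℕ)^(n-1+1) = 2^n := by congr 1; omega
  rw [hss] at hj3
  exact exclusion_m1 K hu hn2 hK1 j hj1 hj3 hcc

lemma mtop_irreducible (K : ℤ) (hu : Odd u) (hn2 : 2 ≤ n) (hKt : K = 2^(n-1) * u) :
    IsIrreducibleE (monoSol (2^n) ((K : ZMod (2^n)))) := by
  apply irr_of_exclusion K (show 1 ≤ n-1 from by omega) (show n - 1 < n from by omega) hu hKt
  intro j hj1 hj3 hcc
  have hss : (2:ℕ)^(n-(n-1)+1) = 4 := by
    rw [show n - (n-1) + 1 = 2 from by omega]; norm_num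
  rw [hss] at hj3
  have hj : j = 1 := by omega
  subst hj
  have hKe : Even K := by
    rw [hKt, show n-1 = (n-2)+1 from by omega, pow_succ']
    exact ⟨2^(n-2)*u, by ring⟩
  exact exclusion_j_odd K (by omega) hKe ⟨0, by ring⟩ hcc

lemma mid_reducible (K : ℤ) (hu : Odd u) (hm2 : 2 ≤ m) (hmn2 : m + 2 ≤ n) (hKu : K = 2^m * u) :
    IsReducibleE (monoSol (2^n) ((K : ZMod (2^n)))) := by
  have hsz := size_even (n := n) K (by omega) (by omega) hu hKu
  rw [monoSol, hsz]
  have hexp : (2:ℕ)^(n-m) = 2 * 2^(n-m-1) := by rw [← pow_succ']; congr 1; omega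
  have h4 : 4 ≤ (2:ℕ)^(n-m) := by
    calc (4:ℕ) = 2^2 := by norm_num
    _ ≤ 2^(n-m) := Nat.pow_le_pow_right (by norm_num) (by omega)
  have hs2 : (2:ℕ)^(n-m+1) = 2 * 2^(n-m) := by rw [pow_succ]; ring
  apply reducible_construct K (j := 2^(n-m)) (by omega) (by omega)
  set i : ℕ := 2^(n-m-1) with hi
  have hieven : Even i := by
    rw [hi, show n-m-1 = (n-m-2)+1 from by omega, pow_succ']
    exact ⟨2^(n-m-2), by
      rw [show (2:ℕ)^(n-m-2) + 2^(n-m-2) = 2 * 2^(n-m-2) from by ring]⟩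
  have hidx : (2:ℕ)^(n-m) + 1 = 2*i + 1 := by omega
  rw [hidx, cc, cast_eq_one_iff]
  rw [C_odd_sub_one i]
  obtain ⟨v, hv, hCi⟩ := C_pow_val (show 1 ≤ m from by omega) hu hKu (n-m-2) 1 odd_one
  rw [mul_one, show n-m-2+1 = n-m-1 from by omega] at hCi
  obtain ⟨w, hw, hT⟩ := T_val_odd_idx (show 1 ≤ m from by omega) hu hKu
    (show Odd (i+1) from hieven.add_one)
  rw [← hi] at hCi
  rw [hCi, hT]
  refine ⟨2^(m-2) * (v * w), ?_⟩
  rw [show (2:ℤ)^(m + (n-m-2)) * v * (2^m * w) = (2^(m+(n-m-2)) * 2^m) * (v * w) from by ring,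
    ← pow_add, show m + (n-m-2) + m = n + (m-2) from by omega, pow_add]
  ring

lemma genMat_zero_sq (hn : 1 ≤ n) :
    genMat (((0:ℤ)) : ZMod (2^n)) ^ 2 = (-1 : Matrix (Fin 2) (Fin 2) (ZMod (2^n))) := by
  rw [pow_two, genMat, Matrix.mul_fin_two,
    show -(1 : Matrix (Fin 2) (Fin 2) (ZMod (2^n))) = !![-1,0;0,-1] from mat_neg_one,
    mat_eq_iff]
  norm_num

lemma size_zero (hn : 1 ≤ n) : monomialSize (2^n) (0 : ZMod (2^n)) = 2 := by
  have h0 : (0 : ZMod (2^n)) = (((0:ℤ)) : ZMod (2^n)) := by norm_num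
  rw [h0]
  apply size_eq
  · norm_num
  · right
    rw [Mword_replicate]
    exact genMat_zero_sq hn
  · intro j hj0 hjs hsol
    have hj : j = 1 := by omega
    subst hj
    have := sol_imp (N := 2^n) (0:ℤ) (j := 0) hsol
    rw [cc_one] at this
    have h4 : ((1 : ℤ) : ZMod (2^n)) = 0 := by simpa using this
    rw [int_cast_eq_zero] at h4
    exact odd_not_dvd ⟨0, by ring⟩ hn h4

lemma zero_not_irr (hn : 1 ≤ n) : ¬ IsIrreducibleE (monoSol (2^n) (0 : ZMod (2^n))) := by
  intro h
  have := h.2.1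
  rw [monoSol, List.length_replicate, size_zero hn] at this
  omega

end EvenCase
end Stmt11

namespace Stmt11
section Main
variable {n : ℕ}

lemma cast_eq_cast_iff {a b : ℤ} :
    ((a : ZMod (2^n))) = ((b : ZMod (2^n))) ↔ (2:ℤ)^n ∣ a - b := by
  rw [← sub_eq_zero, ← Int.cast_sub, int_cast_eq_zero]

lemma int_decomp {k : ℤ} (hk : ¬ Odd k) (hnd : ¬ ((2:ℤ)^n ∣ k)) :
    ∃ (m : ℕ) (u : ℤ), 1 ≤ m ∧ m < n ∧ Odd u ∧ k = 2^m * u := by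
  have hk0 : k ≠ 0 := by rintro rfl; exact hnd (dvd_zero _)
  obtain ⟨e, w, hw, hkw⟩ := Nat.exists_eq_two_pow_mul_odd
    (show k.natAbs ≠ 0 from by simpa using hk0)
  have hsplit : k = 2^e * (w : ℤ) ∨ k = 2^e * (-(w : ℤ)) := by
    rcases Int.natAbs_eq k with h | h
    · left; rw [h, hkw]; push_cast; ring
    · right; rw [h, hkw]; push_cast; ring
  have hwodd : Odd ((w : ℤ)) := hw.natCast
  obtain ⟨u, hu, hku⟩ : ∃ u : ℤ, Odd u ∧ k = 2^e * u := by
    rcases hsplit with h | h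
    · exact ⟨(w : ℤ), hwodd, h⟩
    · exact ⟨-(w : ℤ), hwodd.neg, h⟩
  have he1 : 1 ≤ e := by
    rcases Nat.eq_zero_or_pos e with rfl | h
    · exfalso; apply hk; rw [hku]; simpa using hu
    · exact h
  have hen : e < n := by
    by_contra hc
    exact hnd (by rw [hku]; exact Dvd.dvd.mul_right (pow_dvd_pow 2 (by omega)) u)
  exact ⟨e, u, he1, hen, hu, hku⟩

/-- Main characterization, one k at a time -/
lemma main_iff (hn : 1 ≤ n) (k : ℤ) :
    IsIrreducibleE (monoSol (2^n) ((k : ZMod (2^n)))) ↔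
      (Odd k ∨ ((k : ZMod (2^n))) = (((2:ℤ)^(n-1) : ℤ) : ZMod (2^n)) ∨
        (2 ≤ n ∧ ∃ a : ℤ, Odd a ∧ k = 2 * a)) := by
  by_cases hodd : Odd k
  · exact iff_of_true (odd_irreducible k hn hodd) (Or.inl hodd)
  by_cases hdvd : (2:ℤ)^n ∣ k
  · -- k ≡ 0
    have hk0 : ((k : ZMod (2^n))) = 0 := int_cast_eq_zero.mpr hdvd
    apply iff_of_false
    · rw [hk0]; exact zero_not_irr hn
    · rintro (h | h | ⟨hn2, a, ha, rfl⟩)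
      · exact hodd h
      · rw [cast_eq_cast_iff] at h
        have h2 : (2:ℤ)^n ∣ (2:ℤ)^(n-1) := by
          have h3 := dvd_sub hdvd h
          rwa [show k - (k - 2^(n-1)) = 2^(n-1) from by ring] at h3
        have h4 : (2:ℤ)^n ∣ 2^(n-1) * 1 := by simpa using h2
        have := pow_mul_odd_dvd_le odd_one h4
        omega
      · have h2 : (2:ℤ)^n ∣ 2^1 * a := by
          have : (2:ℤ) * a = 2^1 * a := by ring
          rwa [← this]
        have := pow_mul_odd_dvd_le ha h2
        omega
  · obtain ⟨m, u, hm1, hmn, hu, hku⟩ := int_decomp hodd hdvd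
    by_cases hm1' : m = 1
    · subst hm1'
      apply iff_of_true
      · exact m1_irreducible k hu (by omega) (by rw [hku]; ring)
      · exact Or.inr (Or.inr ⟨by omega, u, hu, by rw [hku]; ring⟩)
    by_cases hmtop : m = n - 1
    · subst hmtop
      apply iff_of_true
      · exact mtop_irreducible k hu (by omega) hku
      · refine Or.inr (Or.inl ?_)
        rw [cast_eq_cast_iff]
        rcases hu with ⟨t, rfl⟩
        have hp : (2:ℤ)^n = 2^(n-1) * 2 := by rw [← pow_succ]; congr 1; omega
        exact ⟨t, by rw [hku, hp]; ring⟩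
    · -- 2 ≤ m ≤ n - 2
      have hm2 : 2 ≤ m := by omega
      have hmn2 : m + 2 ≤ n := by omega
      apply iff_of_false
      · intro h
        exact h.2.2 (mid_reducible k hu hm2 hmn2 hku)
      · rintro (h | h | ⟨hn2, a, ha, hka⟩)
        · exact hodd h
        · rw [cast_eq_cast_iff] at h
          have heq : k - 2^(n-1) = 2^m * (u - 2^(n-1-m)) := by
            rw [hku, mul_sub, ← pow_add, show m + (n-1-m) = n-1 from by omega]
          rw [heq] at h
          have hod : Odd (u - 2^(n-1-m)) := by
            rcases hu with ⟨t, rfl⟩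
            refine ⟨t - 2^(n-2-m), ?_⟩
            rw [show n-1-m = (n-2-m)+1 from by omega, pow_succ]
            ring
          have := pow_mul_odd_dvd_le hod h
          omega
        · -- k = 2a with a odd, but k = 2^m u with m ≥ 2
          have hpm : (2:ℤ)^m = 2 * 2^(m-1) := by rw [← pow_succ']; congr 1; omega
          have heqa : a = 2^(m-1) * u := by
            have h2 : (2:ℤ) * a = 2 * (2^(m-1) * u) := by rw [← hka, hku, hpm]; ring
            exact mul_left_cancel₀ (by norm_num) h2
          have hpm2 : (2:ℤ)^(m-1) = 2 * 2^(m-2) := by rw [← pow_succ']; congr 1; omega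
          have hea : Even a := ⟨2^(m-2) * u, by rw [heqa, hpm2]; ring⟩
          exact (Int.not_odd_iff_even.mpr hea) ha

end Main
end Stmt11

namespace Stmt11
section Count
variable {n : ℕ}

lemma val_char (hn3 : 3 ≤ n) (j : ZMod (2^n)) :
    IsIrreducibleE (monoSol (2^n) j) ↔
      (j.val % 2 = 1 ∨ j.val % 4 = 2 ∨ j.val = 2^(n-1)) := by
  have hcast : (((j.val : ℤ)) : ZMod (2^n)) = j := by
    push_cast
    exact ZMod.natCast_rightInverse j
  have hlt : (2:ℕ)^(n-1) < 2^n := Nat.pow_lt_pow_right (by norm_num) (by omega)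
  have hvalc : (ZMod.val (((2:ℕ)^(n-1) : ℕ) : ZMod (2^n))) = 2^(n-1) :=
    ZMod.val_cast_of_lt hlt
  conv_lhs => rw [← hcast]
  rw [main_iff (by omega) (j.val : ℤ)]
  constructor
  · rintro (h | h | ⟨hn2, a, ha, hva⟩)
    · left
      rw [Int.odd_coe_nat, Nat.odd_iff] at h
      exact h
    · right; right
      have h2 : j = (((2:ℕ)^(n-1) : ℕ) : ZMod (2^n)) := by
        rw [← hcast, h]; push_cast; ring
      rw [h2, hvalc]
    · right; left
      rcases ha with ⟨t, rfl⟩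
      omega
  · rintro (h | h | h)
    · left
      rw [Int.odd_coe_nat, Nat.odd_iff]
      exact h
    · right; right
      obtain ⟨s, hs⟩ : ∃ s : ℕ, j.val = 4*s + 2 := ⟨j.val / 4, by omega⟩
      refine ⟨by omega, 2*(s:ℤ)+1, ⟨(s:ℤ), by ring⟩, by rw [hs]; push_cast; ring⟩
    · right; left
      rw [h]
      push_cast
      ring

lemma count_nat (hn3 : 3 ≤ n) :
    ((Finset.range (2^n)).filter
      (fun v => v % 2 = 1 ∨ v % 4 = 2 ∨ v = 2^(n-1))).card = 3 * 2^(n-2) + 1 := by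
  classical
  have hp1 : (2:ℕ)^n = 4 * 2^(n-2) := by
    calc (2:ℕ)^n = 2^((n-2)+2) := by congr 1; omega
    _ = 4 * 2^(n-2) := by rw [pow_add]; ring
  have hp2 : (2:ℕ)^(n-1) = 4 * 2^(n-3) := by
    calc (2:ℕ)^(n-1) = 2^((n-3)+2) := by congr 1; omega
    _ = 4 * 2^(n-3) := by rw [pow_add]; ring
  have hp3 : (2:ℕ)^(n-2) = 2 * 2^(n-3) := by
    calc (2:ℕ)^(n-2) = 2^((n-3)+1) := by congr 1; omega
    _ = 2 * 2^(n-3) := by rw [pow_succ]; ring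
  have hp0 : 1 ≤ (2:ℕ)^(n-3) := Nat.one_le_two_pow
  have hsplit : ∀ v ∈ Finset.range (2^n),
      ((v % 2 = 1 ∨ v % 4 = 2 ∨ v = 2^(n-1)) ↔ (¬(v % 4 = 0) ∨ v = 2^(n-1))) := by
    intro v _
    omega
  rw [Finset.filter_congr hsplit, Finset.filter_or]
  have hsing : (Finset.range (2^n)).filter (fun v => v = 2^(n-1)) = {2^(n-1)} := by
    rw [Finset.filter_eq']
    rw [if_pos (Finset.mem_range.mpr (by omega))]
  have hdisj : Disjoint ((Finset.range (2^n)).filter (fun v => ¬(v % 4 = 0)))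
      ((Finset.range (2^n)).filter (fun v => v = 2^(n-1))) := by
    rw [Finset.disjoint_left]
    intro v hv1 hv2
    rw [Finset.mem_filter] at hv1 hv2
    omega
  rw [Finset.card_union_of_disjoint hdisj, hsing, Finset.card_singleton]
  have himg : (Finset.range (2^n)).filter (fun v => v % 4 = 0)
      = (Finset.range (2^(n-2))).image (fun t => 4*t) := by
    ext v
    simp only [Finset.mem_filter, Finset.mem_range, Finset.mem_image]
    constructor
    · rintro ⟨hv, hm⟩
      exact ⟨v / 4, by omega, by omega⟩
    · rintro ⟨t, ht, rfl⟩
      omega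
  have hcard4 : ((Finset.range (2^n)).filter (fun v => v % 4 = 0)).card = 2^(n-2) := by
    rw [himg, Finset.card_image_of_injective _ (fun a b h => by omega), Finset.card_range]
  have hnot : ((Finset.range (2^n)).filter (fun v => ¬(v % 4 = 0))).card
      = 2^n - 2^(n-2) := by
    rw [Finset.filter_not, Finset.card_sdiff_of_subset (Finset.filter_subset _ _),
      Finset.card_range, hcard4]
  rw [hnot]
  omega

lemma count_final (hn3 : 3 ≤ n) :
    Nat.card {j : ZMod (2^n) // IsIrreducibleE (monoSol (2^n) j)} = 3 * 2^(n-2) + 1 := by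
  classical
  rw [Nat.card_eq_fintype_card, Fintype.card_subtype]
  have hbij : (Finset.univ.filter (fun j : ZMod (2^n) => IsIrreducibleE (monoSol (2^n) j))).card
      = ((Finset.range (2^n)).filter
          (fun v => v % 2 = 1 ∨ v % 4 = 2 ∨ v = 2^(n-1))).card := by
    apply Finset.card_nbij' (i := fun j => j.val) (j := fun v => ((v : ℕ) : ZMod (2^n)))
    · intro a ha
      rw [Finset.mem_coe, Finset.mem_filter] at ha
      rw [Finset.mem_coe, Finset.mem_filter, Finset.mem_range]
      exact ⟨ZMod.val_lt a, (val_char hn3 a).mp ha.2⟩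
    · intro v hv
      rw [Finset.mem_coe, Finset.mem_filter, Finset.mem_range] at hv
      rw [Finset.mem_coe, Finset.mem_filter]
      refine ⟨Finset.mem_univ _, (val_char hn3 _).mpr ?_⟩
      rw [ZMod.val_cast_of_lt hv.1]
      exact hv.2
    · intro a _
      exact ZMod.natCast_rightInverse a
    · intro v hv
      rw [Finset.mem_coe, Finset.mem_filter, Finset.mem_range] at hv
      exact ZMod.val_cast_of_lt hv.1
  rw [hbij, count_nat hn3]

end Count
end Stmt11

/-- for `N = 2^n` with `n ≥ 1`, the `(k mod N)`-monomial minimal solution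
of `(E_N)` is irreducible iff `k` is odd, or `k ≡ 2^(n-1) (mod N)`, or `n ≥ 2` and
`k = 2a` with `a` odd; moreover if `n ≥ 3`, the number of `k ∈ ZMod N` with irreducible
`k`-monomial minimal solution equals `3·2^(n-2) + 1`. -/
theorem stmt_11 (n : ℕ) (hn : 1 ≤ n) :
    (∀ k : ℤ, IsIrreducibleE (monoSol (2 ^ n) (k : ZMod (2 ^ n))) ↔
      (Odd k ∨ (k : ZMod (2 ^ n)) = ((2 ^ (n - 1) : ℤ) : ZMod (2 ^ n)) ∨
        (2 ≤ n ∧ ∃ a : ℤ, Odd a ∧ k = 2 * a))) ∧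
    (3 ≤ n → Nat.card {j : ZMod (2 ^ n) // IsIrreducibleE (monoSol (2 ^ n) j)} =
      3 * 2 ^ (n - 2) + 1) := by
  constructor
  · intro k
    exact Stmt11.main_iff hn k
  · intro hn3
    exact Stmt11.count_final hn3
end

section
/- Let N ≥ 2. If 16 divides N, then the (N/4 mod N)-monomial minimal solution of (E_N) is reducible. If p is an odd prime such that p² divides N, then the (N/p mod N)-monomial minimal solution of (E_N) is reducible. In both cases, N is monomially reducible. -/
open Matrix

section Aux

set_option linter.unusedTactic false
set_option linter.unreachableTactic false

variable {N : ℕ}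

lemma mword_replicate (k : ZMod N) (n : ℕ) :
    Mword (List.replicate n k) = genMat k ^ n := by
  simp [Mword, List.reverse_replicate, List.map_replicate, List.prod_replicate]

lemma genMat_sq (k : ZMod N) (hk : k * k = 0) :
    genMat k * genMat k = !![-1, -k; k, -1] := by
  ext i j
  fin_cases i <;> fin_cases j <;>
    simp [genMat, Matrix.mul_apply, Fin.sum_univ_two, hk]

lemma genMat_pow_even (k : ZMod N) (hk : k * k = 0) (m : ℕ) :
    genMat k ^ (2 * m) =
      !![(-1 : ZMod N) ^ m, (-1 : ZMod N) ^ m * ((m : ZMod N) * k);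
         -((-1 : ZMod N) ^ m * ((m : ZMod N) * k)), (-1 : ZMod N) ^ m] := by
  induction m with
  | zero => simp [Matrix.one_fin_two]
  | succ m ih =>
      have h2 : 2 * (m + 1) = 2 * m + 2 := by ring
      rw [h2, pow_add, ih, pow_two, genMat_sq k hk]
      ext i j
      have hk2 : k ^ 2 = 0 := by rw [pow_two]; exact hk
      fin_cases i <;> fin_cases j <;>
        simp [Matrix.mul_apply, Fin.sum_univ_two] <;>
        (try push_cast) <;> (try ring_nf) <;> simp [hk2, hk]

lemma monomialSize_eq (hN : 2 ≤ N) (k : ZMod N) (d : ℕ) (hd : 3 ≤ d)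
    (hk : k * k = 0) (hdk : (d : ZMod N) * k = 0)
    (hmin : ∀ m : ℕ, 0 < m → m < d → ((m : ZMod N)) * k ≠ 0) :
    monomialSize N k = 2 * d ∧ IsSolutionE (List.replicate (2*d) k) := by
  haveI : Fact (1 < N) := ⟨hN⟩
  have hsol : IsSolutionE (List.replicate (2*d) k) := by
    rw [IsSolutionE, mword_replicate, genMat_pow_even k hk d, hdk]
    rcases Nat.even_or_odd d with he | ho
    · left
      rw [he.neg_one_pow]
      simp [Matrix.one_fin_two]
    · right
      rw [ho.neg_one_pow]
      ext i j
      fin_cases i <;> fin_cases j <;> simp [Matrix.one_fin_two]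
  constructor
  · apply le_antisymm
    · exact Nat.sInf_le ⟨by omega, hsol⟩
    · refine le_csInf ⟨2*d, ?_⟩ ?_
      · exact ⟨by omega, hsol⟩
      rintro n ⟨hn0, hnsol⟩
      by_contra hlt
      push_neg at hlt
      rw [IsSolutionE, mword_replicate] at hnsol
      have hs : ((-1 : ZMod N) ^ (n/2)) ≠ 0 := by
        intro h
        exact (IsUnit.ne_zero ((isUnit_one.neg).pow _)) h
      rcases Nat.even_or_odd n with ⟨m, hm⟩ | ⟨m, hm⟩
      · have hn : n = 2 * m := by omega
        rw [hn, genMat_pow_even k hk m] at hnsol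
        have hent : (-1 : ZMod N) ^ m * ((m : ZMod N) * k) = 0 := by
          rcases hnsol with h | h
          · have := congrArg (fun M => M 0 1) h
            simpa [Matrix.one_apply] using this
          · have := congrArg (fun M => M 0 1) h
            simpa [Matrix.one_apply] using this
        have : ((m : ZMod N) * k) = 0 := by
          have hu : IsUnit ((-1 : ZMod N) ^ m) := (isUnit_one.neg).pow _
          exact (hu.mul_right_eq_zero).mp hent
        exact hmin m (by omega) (by omega) this
      · have hn : n = 2 * m + 1 := by omega
        rw [hn, pow_succ, genMat_pow_even k hk m] at hnsol
        have hent : (-1 : ZMod N) ^ m = 0 := by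
          rcases hnsol with h | h
          · have := congrArg (fun M => M 1 0) h
            simp [genMat, Matrix.mul_apply, Fin.sum_univ_two, Matrix.one_apply] at this
            calc (-1 : ZMod N) ^ m = -((-1:ZMod N) ^ m * (↑m * k) * k) + (-1:ZMod N)^m := by
                  ring_nf
                  have hk2 : k ^ 2 = 0 := by rw [pow_two]; exact hk
                  simp [hk2]
              _ = 0 := this
          · have := congrArg (fun M => M 1 0) h
            simp [genMat, Matrix.mul_apply, Fin.sum_univ_two, Matrix.one_apply] at this
            calc (-1 : ZMod N) ^ m = -((-1:ZMod N) ^ m * (↑m * k) * k) + (-1:ZMod N)^m := by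
                  ring_nf
                  have hk2 : k ^ 2 = 0 := by rw [pow_two]; exact hk
                  simp [hk2]
              _ = 0 := this
        exact (IsUnit.ne_zero ((isUnit_one.neg).pow m)) hent
  · exact hsol

lemma bsol (k : ZMod N) (hk : k * k = 0) :
    IsSolutionE [-k, k, k, -k] := by
  left
  show Mword [-k, k, k, -k] = 1
  rw [Mword]
  simp only [List.reverse_cons, List.reverse_nil, List.nil_append, List.cons_append,
    List.map_cons, List.map_nil, List.prod_cons, List.prod_nil, mul_one]
  ext i j
  fin_cases i <;> fin_cases j <;>
    simp [genMat, Matrix.mul_apply, Fin.sum_univ_two, Matrix.one_apply, hk] <;> ring_nf <;>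
    (try (have hk2 : k ^ 2 = 0 := by rw [pow_two]; exact hk; simp [hk2, hk]))

lemma rep_oplus (k : ZMod N) (d : ℕ) (hd : 3 ≤ d) :
    List.replicate (2*d) k =
      oplus ((2*k) :: (List.replicate (2*d-4) k ++ [2*k])) [-k, k, k, -k] := by
  rw [oplus]
  simp only [List.headD_cons, List.getLastD_cons, List.drop_succ_cons, List.drop_zero,
    List.dropLast_concat, List.getLastD_concat]
  have h1 : 2*k + -k = k := by ring
  have h2 : (2*d) = 1 + ((2*d-4) + 3) := by omega
  rw [h1]
  conv_lhs => rw [h2, List.replicate_add, List.replicate_add]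
  simp [List.replicate_succ]
  ring

lemma key (hN : 2 ≤ N) (k : ZMod N) (d : ℕ) (hd : 3 ≤ d)
    (hk : k * k = 0) (hdk : (d : ZMod N) * k = 0)
    (hmin : ∀ m : ℕ, 0 < m → m < d → ((m : ZMod N)) * k ≠ 0) :
    IsReducibleSol (monoSol N k) ∧ ¬ MonomiallyIrreducible N := by
  obtain ⟨hsize, hsol⟩ := monomialSize_eq hN k d hd hk hdk hmin
  have hmono : monoSol N k = List.replicate (2*d) k := by rw [monoSol, hsize]
  have hred : IsReducibleE (monoSol N k) := by
    refine ⟨(2*k) :: (List.replicate (2*d-4) k ++ [2*k]), [-k, k, k, -k],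
      ?_, ?_, bsol k hk, ?_⟩
    · simp only [List.length_cons, List.length_append, List.length_replicate,
        List.length_singleton]
      omega
    · simp
    · left
      exact ⟨0, by rw [List.rotate_zero, hmono]; exact (rep_oplus k d hd).symm⟩
  have hk0 : k ≠ 0 := by
    have := hmin 1 (by omega) (by omega)
    simpa using this
  refine ⟨⟨by rw [hmono]; exact hsol, fun hirr => hirr.2.2 hred⟩, fun hmi => ?_⟩
  exact (hmi k hk0).2.2 hred

end Aux

/-- if `16 ∣ N` then the `(N/4 mod N)`-monomial minimal solution of
`(E_N)` is reducible; if `p` is an odd prime with `p² ∣ N` then the `(N/p mod N)`-monomial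
minimal solution of `(E_N)` is reducible; in both cases `N` is monomially reducible. -/
theorem stmt_12 (N : ℕ) (hN : 2 ≤ N) :
    (16 ∣ N →
      IsReducibleSol (monoSol N ((N / 4 : ℕ) : ZMod N)) ∧ ¬ MonomiallyIrreducible N) ∧
    (∀ p : ℕ, p.Prime → Odd p → p ^ 2 ∣ N →
      IsReducibleSol (monoSol N ((N / p : ℕ) : ZMod N)) ∧ ¬ MonomiallyIrreducible N) := by
  haveI : NeZero N := ⟨by omega⟩
  constructor
  · intro h16
    obtain ⟨t, ht⟩ := h16
    have ht0 : 0 < t := by omega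
    have hdiv : N / 4 = 4 * t := by omega
    rw [hdiv]
    apply key hN _ 4 (by norm_num)
    · have e : ((4*t:ℕ):ZMod N) * ((4*t:ℕ):ZMod N) = ((4*t*(4*t) : ℕ) : ZMod N) := by
        push_cast; ring
      rw [e, ZMod.natCast_eq_zero_iff]
      exact ⟨t, by rw [ht]; ring⟩
    · have e : ((4:ℕ):ZMod N) * ((4*t:ℕ):ZMod N) = ((4*(4*t) : ℕ) : ZMod N) := by
        push_cast; ring

      rw [e, ZMod.natCast_eq_zero_iff]
      exact ⟨1, by omega⟩
    · intro m hm0 hm4 hcon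
      have e : ((m:ℕ):ZMod N) * ((4*t:ℕ):ZMod N) = ((m*(4*t) : ℕ) : ZMod N) := by
        push_cast; ring
      rw [e, ZMod.natCast_eq_zero_iff] at hcon
      have h4 : 4 * (4*t) ∣ m * (4*t) := by
        have : N = 4*(4*t) := by omega
        rwa [this] at hcon
      have := (Nat.mul_dvd_mul_iff_right (show 0 < 4*t by omega)).mp h4
      omega
  · intro p hp hodd hp2
    obtain ⟨t, ht⟩ := hp2
    have hp3 : 3 ≤ p := by
      have h2 := hp.two_le
      have : p ≠ 2 := by
        rintro rfl
        simp [Nat.odd_iff] at hodd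
      omega
    have ht0 : 0 < t := by
      rcases Nat.eq_zero_or_pos t with h | h
      · subst h; simp at ht; omega
      · exact h
    have hdiv : N / p = p * t := by
      rw [ht, pow_two, mul_assoc, Nat.mul_div_cancel_left _ (by omega : 0 < p)]
    rw [hdiv]
    apply key hN _ p hp3
    · have e : ((p*t:ℕ):ZMod N) * ((p*t:ℕ):ZMod N) = ((p*t*(p*t) : ℕ) : ZMod N) := by
        push_cast; ring
      rw [e, ZMod.natCast_eq_zero_iff]
      exact ⟨t, by rw [ht]; ring⟩
    · have e : ((p:ℕ):ZMod N) * ((p*t:ℕ):ZMod N) = ((p*(p*t) : ℕ) : ZMod N) := by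
        push_cast; ring
      rw [e, ZMod.natCast_eq_zero_iff]
      exact ⟨1, by rw [ht]; ring⟩
    · intro m hm0 hmp hcon
      have e : ((m:ℕ):ZMod N) * ((p*t:ℕ):ZMod N) = ((m*(p*t) : ℕ) : ZMod N) := by
        push_cast; ring
      rw [e, ZMod.natCast_eq_zero_iff] at hcon
      have hpd : p * (p*t) ∣ m * (p*t) := by
        have : N = p*(p*t) := by rw [ht]; ring
        rwa [this] at hcon
      have hdvd := (Nat.mul_dvd_mul_iff_right (show 0 < p*t by positivity)).mp hpd
      have := Nat.le_of_dvd hm0 hdvd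
      omega
end

section
/- Let N = n·m where n and m are coprime natural numbers both different from 1, and suppose m is odd and not divisible by 3. Then there exists an integer k with 1 ≤ k ≤ N−1 such that k is coprime to N and the (k mod N)-monomial minimal solution of (E_N) is reducible; moreover its size is 6m if n > 2 and 3m if n = 2. -/
open Matrix

namespace Aux13

variable {R : Type*} [CommRing R]

/-- Chebyshev-like sequence: `f 0 = 0`, `f 1 = 1`, `f (i+2) = k * f (i+1) - f i`. -/
def fseq (k : R) : ℕ → R
  | 0 => 0
  | 1 => 1
  | (i+2) => k * fseq k (i+1) - fseq k i

@[simp] lemma fseq_zero (k : R) : fseq k 0 = 0 := rfl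
@[simp] lemma fseq_one (k : R) : fseq k 1 = 1 := rfl
lemma fseq_add_two (k : R) (i : ℕ) : fseq k (i+2) = k * fseq k (i+1) - fseq k i := rfl

lemma fseq_map {S : Type*} [CommRing S] (φ : R →+* S) (k : R) (i : ℕ) :
    φ (fseq k i) = fseq (φ k) i := by
  induction i using Nat.twoStepInduction with
  | zero => simp
  | one => simp
  | more i h1 h2 => simp [fseq_add_two, h1, h2]

lemma genMat_pow {N : ℕ} (k : ZMod N) (i : ℕ) :
    (genMat k)^(i+1) = !![fseq k (i+2), -fseq k (i+1); fseq k (i+1), -fseq k i] := by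
  induction i with
  | zero => simp [genMat, fseq_add_two]
  | succ i ih =>
      rw [pow_succ, ih, genMat, Matrix.mul_fin_two]
      rw [show i+1+1 = i+2 from rfl, fseq_add_two k (i+1), fseq_add_two k i]
      congr 1 <;> ring_nf

lemma genMat_pow_eq_iff {N : ℕ} (k : ZMod N) (i : ℕ) (ε : ZMod N) :
    (genMat k)^(i+1) = ε • (1 : Matrix (Fin 2) (Fin 2) (ZMod N)) ↔
      fseq k (i+1) = 0 ∧ fseq k (i+2) = ε := by
  rw [genMat_pow]
  constructor
  · intro h
    have h10 := congrFun (congrFun h 1) 0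
    have h00 := congrFun (congrFun h 0) 0
    simp [Matrix.one_apply] at h10 h00
    exact ⟨h10, h00⟩
  · rintro ⟨h1, h2⟩
    have h0 : fseq k i = -ε := by
      have h := fseq_add_two k i
      rw [h1, h2, mul_zero] at h
      rw [h]; ring
    rw [h1, h2, h0]
    ext a b
    fin_cases a <;> fin_cases b <;> simp [Matrix.one_apply]

lemma genMat_pow_eq_one_iff {N : ℕ} (k : ZMod N) (i : ℕ) :
    (genMat k)^(i+1) = 1 ↔ fseq k (i+1) = 0 ∧ fseq k (i+2) = 1 := by
  have h := genMat_pow_eq_iff k i 1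
  rwa [one_smul] at h

lemma genMat_pow_eq_neg_one_iff {N : ℕ} (k : ZMod N) (i : ℕ) :
    (genMat k)^(i+1) = -1 ↔ fseq k (i+1) = 0 ∧ fseq k (i+2) = -1 := by
  have h := genMat_pow_eq_iff k i (-1)
  rwa [neg_smul, one_smul] at h

lemma Mword_replicate {N : ℕ} (k : ZMod N) (j : ℕ) :
    Mword (List.replicate j k) = genMat k ^ j := by
  unfold Mword
  rw [List.reverse_replicate, List.map_replicate, List.prod_replicate]

lemma crt_eq_iff (n m : ℕ) (hn : n ≠ 0) (hm : m ≠ 0) (hcop : Nat.Coprime n m)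
    (z w : ZMod (n*m)) :
    z = w ↔ (ZMod.castHom (dvd_mul_right n m) (ZMod n) z =
              ZMod.castHom (dvd_mul_right n m) (ZMod n) w ∧
             ZMod.castHom (dvd_mul_left m n) (ZMod m) z =
              ZMod.castHom (dvd_mul_left m n) (ZMod m) w) := by
  constructor
  · rintro rfl; exact ⟨rfl, rfl⟩
  · rintro ⟨h1, h2⟩
    haveI : NeZero (n*m) := ⟨Nat.mul_ne_zero hn hm⟩
    have key : ∀ u : ZMod (n*m),
        ZMod.castHom (dvd_mul_right n m) (ZMod n) u = 0 →
        ZMod.castHom (dvd_mul_left m n) (ZMod m) u = 0 → u = 0 := by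
      intro u e1 e2
      have hu : u = ((u.val : ℕ) : ZMod (n*m)) := (ZMod.natCast_zmod_val u).symm
      rw [hu, map_natCast] at e1 e2
      rw [ZMod.natCast_eq_zero_iff] at e1 e2
      have hd : n * m ∣ u.val := Nat.Coprime.mul_dvd_of_dvd_of_dvd hcop e1 e2
      have hlt : u.val < n * m := ZMod.val_lt u
      have hv : u.val = 0 := Nat.eq_zero_of_dvd_of_lt hd hlt
      rw [hu, hv]; simp
    have h := key (z - w) (by rw [map_sub, h1, sub_self]) (by rw [map_sub, h2, sub_self])
    exact sub_eq_zero.mp h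

/-- Over parameter 2, the sequence is `j`. -/
lemma fseq_two_param (j : ℕ) : fseq (2 : R) j = (j : R) := by
  induction j using Nat.twoStepInduction with
  | zero => simp
  | one => simp
  | more i h1 h2 => rw [fseq_add_two, h1, h2]; push_cast; ring

lemma fseq_one_param_add_three (i : ℕ) : fseq (1 : R) (i+3) = -fseq (1 : R) i := by
  rw [show i+3 = (i+1)+2 from rfl, fseq_add_two, fseq_add_two]; ring

lemma fseq_one_param_periodic (s r : ℕ) :
    fseq (1 : R) (3*s + r) = (-1)^s * fseq (1 : R) r := by
  induction s with
  | zero => simp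
  | succ s ih =>
      have h : 3*(s+1) + r = (3*s + r) + 3 := by ring
      rw [h, fseq_one_param_add_three, ih, pow_succ]; ring

@[simp] lemma fseq_one_param_two : fseq (1 : R) 2 = 1 := by
  rw [fseq_add_two]; simp

lemma fseq_one_param_eq (j : ℕ) :
    fseq (1 : R) j = (-1)^(j/3) * fseq (1 : R) (j % 3) := by
  conv_lhs => rw [show j = 3*(j/3) + j % 3 by omega]
  exact fseq_one_param_periodic _ _

lemma fseq_one_param_eq_zero_iff [Nontrivial R] (j : ℕ) :
    fseq (1 : R) j = 0 ↔ j % 3 = 0 := by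
  rw [fseq_one_param_eq]
  constructor
  · intro h
    have hunit : IsUnit ((-1 : R)^(j/3)) := (IsUnit.neg isUnit_one).pow _
    have h2 : fseq (1 : R) (j % 3) = 0 := by
      rcases hunit.exists_left_inv with ⟨c, hc⟩
      have h4 := congrArg (c * ·) h
      simp only [mul_zero] at h4
      calc fseq (1:R) (j%3) = c * ((-1)^(j/3) * fseq (1:R) (j%3)) := by
            rw [← mul_assoc, hc, one_mul]
        _ = 0 := h4
    have h3 : j % 3 = 0 ∨ j % 3 = 1 ∨ j % 3 = 2 := by omega
    rcases h3 with h3 | h3 | h3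
    · exact h3
    · rw [h3] at h2; simp at h2
    · rw [h3] at h2; simp at h2
  · intro h; rw [h]; simp

/-- Master characterization of monomial solutions for our special `k`. -/
lemma sol_iff (n m : ℕ) (hn : 2 ≤ n) (hm : 5 ≤ m) (hcop : Nat.Coprime n m)
    (k : ℕ) (hk1 : k % n = 1 % n) (hk2 : k % m = 2 % m) (j : ℕ) (hj : 0 < j) :
    IsSolutionE (List.replicate j ((k : ZMod (n*m)))) ↔
      (j % 3 = 0 ∧ m ∣ j ∧ (-1 : ZMod n)^(j/3) = 1) := by
  haveI : Fact (1 < n) := ⟨by omega⟩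
  haveI : NeZero m := ⟨by omega⟩
  obtain ⟨i, rfl⟩ : ∃ i, j = i+1 := ⟨j-1, by omega⟩
  set K : ZMod (n*m) := (k : ZMod (n*m)) with hK
  set φn := ZMod.castHom (dvd_mul_right n m) (ZMod n) with hφn
  set φm := ZMod.castHom (dvd_mul_left m n) (ZMod m) with hφm
  have hkn : φn K = 1 := by
    rw [hK, map_natCast]
    have h : (k : ZMod n) = ((1:ℕ) : ZMod n) := (ZMod.natCast_eq_natCast_iff _ _ _).mpr hk1
    simpa using h
  have hkm : φm K = 2 := by
    rw [hK, map_natCast]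
    have h : (k : ZMod m) = ((2:ℕ) : ZMod m) := (ZMod.natCast_eq_natCast_iff _ _ _).mpr hk2
    simpa using h
  have Tn : ∀ i : ℕ, φn (fseq K i) = fseq (1 : ZMod n) i := fun i => by
    rw [fseq_map, hkn]
  have Tm : ∀ i : ℕ, φm (fseq K i) = ((i : ℕ) : ZMod m) := fun i => by
    rw [fseq_map, hkm, fseq_two_param]
  have E0 : fseq K (i+1) = 0 ↔ ((i+1) % 3 = 0 ∧ m ∣ (i+1)) := by
    rw [crt_eq_iff n m (by omega) (by omega) hcop, ← hφn, ← hφm, _root_.map_zero, _root_.map_zero, Tn, Tm,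
      fseq_one_param_eq_zero_iff, ZMod.natCast_eq_zero_iff]
  have E1 : fseq K (i+2) = 1 ↔
      (fseq (1 : ZMod n) (i+2) = 1 ∧ ((i+2 : ℕ) : ZMod m) = 1) := by
    rw [crt_eq_iff n m (by omega) (by omega) hcop, ← hφn, ← hφm, _root_.map_one, _root_.map_one, Tn, Tm]
  have E2 : fseq K (i+2) = -1 ↔
      (fseq (1 : ZMod n) (i+2) = -1 ∧ ((i+2 : ℕ) : ZMod m) = -1) := by
    rw [crt_eq_iff n m (by omega) (by omega) hcop, ← hφn, ← hφm, _root_.map_neg, _root_.map_neg,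
      _root_.map_one, _root_.map_one, Tn, Tm]
  have castm : ∀ h : m ∣ (i+1), ((i+2 : ℕ) : ZMod m) = 1 := by
    intro h
    have h0 : ((i+1 : ℕ) : ZMod m) = 0 := (ZMod.natCast_eq_zero_iff _ _).mpr h
    have : ((i+2 : ℕ) : ZMod m) = ((i+1 : ℕ) : ZMod m) + 1 := by push_cast; ring
    rw [this, h0, zero_add]
  have castn : (i+1) % 3 = 0 → fseq (1 : ZMod n) (i+2) = (-1 : ZMod n)^((i+1)/3) := by
    intro h3
    rw [fseq_one_param_eq, show (i+2) % 3 = 1 by omega, show (i+2)/3 = (i+1)/3 by omega,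
      fseq_one, mul_one]
  constructor
  · rintro (h | h) <;> rw [Mword_replicate] at h
    · rw [genMat_pow_eq_one_iff] at h
      obtain ⟨h1, h2⟩ := h
      obtain ⟨e3, em⟩ := E0.mp h1
      obtain ⟨en1, -⟩ := E1.mp h2
      rw [castn e3] at en1
      exact ⟨e3, em, en1⟩
    · rw [genMat_pow_eq_neg_one_iff] at h
      obtain ⟨h1, h2⟩ := h
      obtain ⟨e3, em⟩ := E0.mp h1
      obtain ⟨-, em1⟩ := E2.mp h2
      exfalso
      rw [castm em] at em1
      have hdd : ((2:ℕ) : ZMod m) = 0 := by push_cast; linear_combination em1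
      rw [ZMod.natCast_eq_zero_iff] at hdd
      have := Nat.le_of_dvd (by norm_num) hdd
      omega
  · rintro ⟨e3, em, en⟩
    left
    rw [Mword_replicate, genMat_pow_eq_one_iff]
    exact ⟨E0.mpr ⟨e3, em⟩, E1.mpr ⟨by rw [castn e3]; exact en, castm em⟩⟩

lemma Mword_sandwich {N : ℕ} (x : ZMod N) (l : List (ZMod N)) :
    Mword (x :: (l ++ [x])) = genMat x * Mword l * genMat x := by
  unfold Mword
  rw [List.reverse_cons, List.reverse_append, List.map_append, List.prod_append,
    List.map_append, List.prod_append]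
  simp [mul_assoc]

lemma red_of (N : ℕ) (k : ZMod N) (t L : ℕ) (ht2 : 2 ≤ t) (htL : t + 2 ≤ L)
    (hft : fseq k t = 1) : IsReducibleE (List.replicate L k) := by
  set y := fseq k (t-1) with hy
  have h1 : (genMat k).det = 1 := by rw [genMat, Matrix.det_fin_two_of]; ring
  have h2 : ((genMat k)^(t-2+1)).det = 1 := by rw [Matrix.det_pow, h1, one_pow]
  rw [genMat_pow, Matrix.det_fin_two_of, show t-2+2 = t by omega, show t-2+1 = t-1 by omega,
    hft, ← hy] at h2
  have hdet : fseq k (t-2) = y^2 - 1 := by linear_combination -h2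
  have hpow : (genMat k)^(t-1) = !![1, -y; y, -(y^2-1)] := by
    rw [show t-1 = t-2+1 by omega, genMat_pow, show t-2+2 = t by omega,
      show t-2+1 = t-1 by omega, hft, ← hy, hdet]
  have hsol : Mword (y :: (List.replicate (t-1) k ++ [y])) = -1 := by
    rw [Mword_sandwich, Mword_replicate, hpow, genMat, Matrix.mul_fin_two,
      Matrix.mul_fin_two]
    ext a b
    fin_cases a <;> fin_cases b <;>
      simp [Matrix.one_apply] <;> ring
  refine ⟨(k - y) :: (List.replicate (L - t - 1) k ++ [k - y]),
          y :: (List.replicate (t-1) k ++ [y]), ?_, ?_, Or.inr hsol, ?_⟩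
  · simp; omega
  · simp; omega
  · left
    refine ⟨0, ?_⟩
    rw [List.rotate_zero]
    unfold oplus
    simp only [List.headD_cons, List.getLastD_cons, List.getLastD_concat, List.drop_one,
      List.tail_cons, List.dropLast_concat, sub_add_cancel]
    have e1 : (k :: List.replicate (t-1) k : List (ZMod N)) = List.replicate t k := by
      rw [← List.replicate_succ]
      congr 1
      omega
    rw [e1, ← List.replicate_add, ← List.replicate_succ]
    congr 1
    omega

lemma castHom_natCast_eq_of_mod {n N : ℕ} (h : n ∣ N) (k c : ℕ) (hk : k % n = c % n) :
    ZMod.castHom h (ZMod n) ((k : ℕ) : ZMod N) = ((c : ℕ) : ZMod n) := by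
  rw [map_natCast]
  exact (ZMod.natCast_eq_natCast_iff _ _ _).mpr hk

lemma fseq_crt (n m k : ℕ) (hn : 2 ≤ n) (hm : 5 ≤ m) (hcop : Nat.Coprime n m)
    (hk1 : k % n = 1 % n) (hk2 : k % m = 2 % m) (t : ℕ) (h3 : t % 3 = 2)
    (heven : ((-1 : ZMod n))^(t/3) = 1) (htm : t % m = 1 % m) :
    fseq ((k : ℕ) : ZMod (n*m)) t = 1 := by
  rw [crt_eq_iff n m (by omega) (by omega) hcop]
  constructor
  · rw [fseq_map, castHom_natCast_eq_of_mod _ k 1 hk1, Nat.cast_one, _root_.map_one,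
      fseq_one_param_eq, h3, fseq_one_param_two, mul_one, heven]
  · rw [fseq_map, castHom_natCast_eq_of_mod _ k 2 hk2, _root_.map_one]
    rw [show ((2 : ℕ) : ZMod m) = (2 : ZMod m) by push_cast; ring, fseq_two_param]
    have h := (ZMod.natCast_eq_natCast_iff t 1 m).mpr htm
    rw [h, Nat.cast_one]

lemma main_branch (n m k L : ℕ) (hn : 2 ≤ n) (hm : 5 ≤ m) (hcop : Nat.Coprime n m)
    (hk1 : k % n = 1 % n) (hk2 : k % m = 2 % m)
    (hchar : ∀ j, 0 < j → (IsSolutionE (List.replicate j ((k : ℕ) : ZMod (n*m))) ↔ L ∣ j))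
    (hL : 0 < L) (t : ℕ) (h3 : t % 3 = 2) (heven : ((-1 : ZMod n))^(t/3) = 1)
    (htm : t % m = 1 % m) (ht2 : 2 ≤ t) (htL : t + 2 ≤ L) :
    IsReducibleSol (monoSol (n*m) ((k : ℕ) : ZMod (n*m))) ∧
      monomialSize (n*m) ((k : ℕ) : ZMod (n*m)) = L := by
  have hsize : monomialSize (n*m) ((k : ℕ) : ZMod (n*m)) = L := by
    have hLS : L ∈ {j : ℕ | 0 < j ∧ IsSolutionE (List.replicate j ((k : ℕ) : ZMod (n*m)))} :=
      ⟨hL, (hchar L hL).mpr dvd_rfl⟩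
    refine le_antisymm (Nat.sInf_le hLS) (le_csInf ⟨L, hLS⟩ ?_)
    rintro x ⟨hx0, hxs⟩
    exact Nat.le_of_dvd hx0 ((hchar x hx0).mp hxs)
  have hmono : monoSol (n*m) ((k : ℕ) : ZMod (n*m)) =
      List.replicate L ((k : ℕ) : ZMod (n*m)) := by
    rw [monoSol, hsize]
  have hsol : IsSolutionE (monoSol (n*m) ((k : ℕ) : ZMod (n*m))) := by
    rw [hmono]; exact (hchar L hL).mpr dvd_rfl
  have hred : IsReducibleE (monoSol (n*m) ((k : ℕ) : ZMod (n*m))) := by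
    rw [hmono]
    exact red_of _ _ t L ht2 htL (fseq_crt n m k hn hm hcop hk1 hk2 t h3 heven htm)
  exact ⟨⟨hsol, fun hirr => hirr.2.2 hred⟩, hsize⟩

end Aux13

/-- if `N = n·m` with `n, m` coprime, both `≠ 1`, `m` odd and not divisible
by `3`, then there is `1 ≤ k ≤ N - 1` coprime to `N` such that the `(k mod N)`-monomial
minimal solution of `(E_N)` is reducible, of size `6m` if `n > 2` and `3m` otherwise. -/
theorem stmt_13 (n m : ℕ) (hn : n ≠ 1) (hm : m ≠ 1) (hcop : Nat.Coprime n m)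
    (hmodd : Odd m) (hm3 : ¬ 3 ∣ m) :
    ∃ k : ℕ, 1 ≤ k ∧ k ≤ n * m - 1 ∧ Nat.Coprime k (n * m) ∧
      IsReducibleSol (monoSol (n * m) (k : ZMod (n * m))) ∧
      monomialSize (n * m) (k : ZMod (n * m)) = (if 2 < n then 6 * m else 3 * m) := by
  have hm2 := Nat.odd_iff.mp hmodd
  have hm3' : m % 3 ≠ 0 := fun h => hm3 (Nat.dvd_of_mod_eq_zero h)
  have hm5 : 5 ≤ m := by omega
  have hn2 : 2 ≤ n := by
    rcases Nat.eq_zero_or_pos n with rfl | h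
    · rw [Nat.coprime_zero_left] at hcop; omega
    · omega
  -- choose k by CRT : k ≡ 1 mod n, k ≡ 2 mod m
  obtain ⟨⟨k, hk1, hk2⟩, hklt⟩ :
      ∃ kk : {k // k ≡ 1 [MOD n] ∧ k ≡ 2 [MOD m]}, (kk : ℕ) < n * m :=
    ⟨Nat.chineseRemainder hcop 1 2,
      Nat.chineseRemainder_lt_mul hcop 1 2 (by omega) (by omega)⟩
  have hklt' : k < n * m := hklt
  have hk1' : k % n = 1 % n := hk1
  have hk2' : k % m = 2 % m := hk2
  have hk0 : 1 ≤ k := by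
    rcases Nat.eq_zero_or_pos k with rfl | h
    · rw [Nat.zero_mod, Nat.mod_eq_of_lt (by omega : 2 < m)] at hk2'; omega
    · exact h
  have hcn : Nat.Coprime k n := by
    have h : Nat.gcd n k = 1 := by
      rw [Nat.gcd_rec, hk1', ← Nat.gcd_rec, Nat.gcd_one_right]
    exact Nat.coprime_comm.mp h
  have h2m : Nat.Coprime 2 m := (Nat.prime_two.coprime_iff_not_dvd).mpr (by omega)
  have h3mc : Nat.Coprime 3 m := (Nat.prime_three.coprime_iff_not_dvd).mpr hm3
  have hcm : Nat.Coprime k m := by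
    have h : Nat.gcd m k = Nat.gcd m 2 := by
      rw [Nat.gcd_rec, hk2', ← Nat.gcd_rec]
    have h2 : Nat.gcd m 2 = 1 := Nat.coprime_comm.mp h2m
    exact Nat.coprime_comm.mp (h.trans h2)
  have hck : Nat.Coprime k (n*m) := Nat.Coprime.mul_right hcn hcm
  refine ⟨k, hk0, by omega, hck, ?_⟩
  by_cases hn3 : 2 < n
  · rw [if_pos hn3]
    have h6m : Nat.Coprime 6 m := by
      have h := Nat.Coprime.mul h2m h3mc
      norm_num at h
      exact h
    haveI : Fact (2 < n) := ⟨hn3⟩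
    have hne : (-1 : ZMod n) ≠ 1 := ZMod.neg_one_ne_one
    have hchar : ∀ j, 0 < j →
        (IsSolutionE (List.replicate j ((k : ℕ) : ZMod (n*m))) ↔ 6*m ∣ j) := by
      intro j hj
      rw [Aux13.sol_iff n m hn2 hm5 hcop k hk1' hk2' j hj]
      constructor
      · rintro ⟨h3, hmj, hpow⟩
        have heven := (neg_one_pow_eq_one_iff_even hne).mp hpow
        rw [Nat.even_iff] at heven
        have h6 : 6 ∣ j := by omega
        exact Nat.Coprime.mul_dvd_of_dvd_of_dvd h6m h6 hmj
      · intro h6j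
        have h6 : 6 ∣ j := dvd_trans (dvd_mul_right 6 m) h6j
        refine ⟨by omega, dvd_trans (dvd_mul_left m 6) h6j, ?_⟩
        apply Even.neg_one_pow
        rw [Nat.even_iff]
        omega
    have hm6 : m % 6 = 1 ∨ m % 6 = 5 := by omega
    rcases hm6 with h | h
    · exact Aux13.main_branch n m k (6*m) hn2 hm5 hcop hk1' hk2' hchar (by omega)
        (1 + 1*m) (by omega)
        (Even.neg_one_pow (Nat.even_iff.mpr (by omega)))
        (Nat.add_mul_mod_self_right 1 1 m) (by omega) (by omega)
    · exact Aux13.main_branch n m k (6*m) hn2 hm5 hcop hk1' hk2' hchar (by omega)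
        (1 + 5*m) (by omega)
        (Even.neg_one_pow (Nat.even_iff.mpr (by omega)))
        (Nat.add_mul_mod_self_right 1 5 m) (by omega) (by omega)
  · rw [if_neg hn3]
    have hn2' : n = 2 := by omega
    subst hn2'
    have hneg : (-1 : ZMod 2) = 1 := by decide
    have hchar : ∀ j, 0 < j →
        (IsSolutionE (List.replicate j ((k : ℕ) : ZMod (2*m))) ↔ 3*m ∣ j) := by
      intro j hj
      rw [Aux13.sol_iff 2 m hn2 hm5 hcop k hk1' hk2' j hj]
      constructor
      · rintro ⟨h3, hmj, -⟩
        exact Nat.Coprime.mul_dvd_of_dvd_of_dvd h3mc (by omega) hmj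
      · intro h3j
        have h3 : 3 ∣ j := dvd_trans (dvd_mul_right 3 m) h3j
        exact ⟨by omega, dvd_trans (dvd_mul_left m 3) h3j, by rw [hneg, one_pow]⟩
    have hm3'' : m % 3 = 1 ∨ m % 3 = 2 := by omega
    rcases hm3'' with h | h
    · exact Aux13.main_branch 2 m k (3*m) hn2 hm5 hcop hk1' hk2' hchar (by omega)
        (1 + 1*m) (by omega) (by rw [hneg, one_pow])
        (Nat.add_mul_mod_self_right 1 1 m) (by omega) (by omega)
    · exact Aux13.main_branch 2 m k (3*m) hn2 hm5 hcop hk1' hk2' hchar (by omega)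
        (1 + 2*m) (by omega) (by rw [hneg, one_pow])
        (Nat.add_mul_mod_self_right 1 2 m) (by omega) (by omega)
end

section
/- Every integer of the form N = 2^n·3^m ≥ 2 (with n, m ≥ 0) is quasi monomially irreducible; that is, for every integer k coprime to N, the (k mod N)-monomial minimal solution of (E_N) is irreducible. -/
open Matrix

namespace Stmt14Aux

/-- Explicit inverse of `genMat a`. -/
def invG {M : ℕ} (a : ZMod M) : Matrix (Fin 2) (Fin 2) (ZMod M) := !![0, 1; -1, a]

lemma genMat_mul_invG {M : ℕ} (a : ZMod M) : genMat a * invG a = 1 := by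
  ext i j
  fin_cases i <;> fin_cases j <;>
    simp [genMat, invG, Matrix.mul_apply, Fin.sum_univ_two, Matrix.one_apply]

lemma invG_mul_genMat {M : ℕ} (a : ZMod M) : invG a * genMat a = 1 := by
  ext i j
  fin_cases i <;> fin_cases j <;>
    simp [genMat, invG, Matrix.mul_apply, Fin.sum_univ_two, Matrix.one_apply]

lemma genMat_sq {M : ℕ} (a : ZMod M) : genMat a ^ 2 = a • genMat a - 1 := by
  ext i j
  fin_cases i <;> fin_cases j <;>
    simp [pow_two, genMat, Matrix.mul_apply, Fin.sum_univ_two, Matrix.one_apply] <;> ring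

lemma pow_eq_smul_of {M : ℕ} {a ε : ZMod M} {t : ℕ}
    (h : genMat a ^ (t + 1) = ε • genMat a) : genMat a ^ t = ε • 1 := by
  have h2 := congrArg (· * invG a) h
  rwa [pow_succ, mul_assoc, genMat_mul_invG, mul_one, smul_mul_assoc, genMat_mul_invG] at h2

lemma pow_eq_neg_smul_of {M : ℕ} {a ε : ZMod M} {t : ℕ}
    (h : genMat a ^ (t + 1) = ε • genMat a - (ε * a) • 1) :
    genMat a ^ (t + 2) = (-ε) • 1 := by
  have h0 : genMat a ^ (t + 2) = genMat a ^ (t + 1) * genMat a := by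
    rw [← pow_succ]
  rw [h0, h, sub_mul, smul_mul_assoc, smul_mul_assoc, one_mul, ← pow_two, genMat_sq,
    smul_sub, smul_smul, neg_smul]
  abel

lemma Mword_replicate {M : ℕ} (k : ZMod M) (r : ℕ) :
    Mword (List.replicate r k) = genMat k ^ r := by
  simp [Mword, List.reverse_replicate, List.map_replicate, List.prod_replicate]

lemma pow_genMat_span {M : ℕ} (k : ZMod M) (t : ℕ) :
    ∃ p q : ZMod M, genMat k ^ (t + 1) = p • genMat k + q • 1 := by
  induction t with
  | zero => exact ⟨1, 0, by simp⟩
  | succ t ih =>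
    obtain ⟨p, q, ih⟩ := ih
    refine ⟨p * k + q, -p, ?_⟩
    rw [pow_succ, ih, add_mul, smul_mul_assoc, smul_mul_assoc, one_mul, ← pow_two, genMat_sq,
      smul_sub, smul_smul, add_smul, neg_smul]
    abel

lemma three_dvd_of_pow_eq_pm {M : ℕ} {C : Matrix (Fin 2) (Fin 2) (ZMod M)}
    (h6 : C ^ 6 = 1) (hsmall : ∀ r < 6, (C ^ r = 1 ∨ C ^ r = -1) → 3 ∣ r)
    (r : ℕ) (h : C ^ r = 1 ∨ C ^ r = -1) : 3 ∣ r := by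
  have hr : C ^ (r % 6) = C ^ r := by
    conv_rhs => rw [← Nat.div_add_mod r 6]
    rw [pow_add, pow_mul, h6, one_pow, one_mul]
  have h3 := hsmall (r % 6) (Nat.mod_lt _ (by norm_num)) (by rw [hr]; exact h)
  omega

lemma three_dvd_small {M : ℕ} (hM : M = 2 ∨ M = 3) (k' : ZMod M) (hk' : k' ≠ 0)
    (r : ℕ) (h : genMat k' ^ r = 1 ∨ genMat k' ^ r = -1) : 3 ∣ r := by
  rcases hM with rfl | rfl
  · have h1 : k' = 1 := (by decide : ∀ x : ZMod 2, x ≠ 0 → x = 1) k' hk'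
    subst h1
    exact three_dvd_of_pow_eq_pm (by decide) (by decide) r h
  · have h1 : k' = 1 ∨ k' = 2 := (by decide : ∀ x : ZMod 3, x ≠ 0 → x = 1 ∨ x = 2) k' hk'
    rcases h1 with rfl | rfl
    · exact three_dvd_of_pow_eq_pm (by decide) (by decide) r h
    · exact three_dvd_of_pow_eq_pm (by decide) (by decide) r h

lemma mapMatrix_smul {R S : Type*} [CommRing R] [CommRing S] (f : R →+* S) (c : R)
    (X : Matrix (Fin 2) (Fin 2) R) : f.mapMatrix (c • X) = f c • f.mapMatrix X := by
  ext i j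
  simp [RingHom.mapMatrix_apply, Matrix.map_apply]

lemma mapMatrix_genMat {M M' : ℕ} (hd : M' ∣ M) (k0 : ℤ) :
    (ZMod.castHom hd (ZMod M')).mapMatrix (genMat ((k0 : ZMod M))) = genMat ((k0 : ZMod M')) := by
  ext i j
  fin_cases i <;> fin_cases j <;>
    simp [genMat, RingHom.mapMatrix_apply, Matrix.map_apply, map_intCast, -ZMod.castHom_apply]

lemma cast_rel {M M' : ℕ} (hd : M' ∣ M) (k0 εZ q' : ℤ) (t : ℕ)
    (hpq : genMat ((k0 : ZMod M)) ^ (t + 1)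
      = ((εZ : ZMod M)) • genMat ((k0 : ZMod M)) + ((q' : ZMod M)) • 1) :
    genMat ((k0 : ZMod M')) ^ (t + 1)
      = ((εZ : ZMod M')) • genMat ((k0 : ZMod M')) + ((q' : ZMod M')) • 1 := by
  have h2 := congrArg (RingHom.mapMatrix (ZMod.castHom hd (ZMod M'))) hpq
  rwa [map_pow, map_add, mapMatrix_smul, mapMatrix_smul, _root_.map_one, mapMatrix_genMat hd,
    map_intCast, map_intCast] at h2

lemma three_dvd_q0 {M : ℕ} (hM : M = 2 ∨ M = 3) (k0 εZ q' : ℤ) (t : ℕ)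
    (hk : (k0 : ZMod M) ≠ 0) (hε : εZ = 1 ∨ εZ = -1) (hq : (q' : ZMod M) = 0)
    (hpq : genMat ((k0 : ZMod M)) ^ (t + 1)
      = ((εZ : ZMod M)) • genMat ((k0 : ZMod M)) + ((q' : ZMod M)) • 1) :
    3 ∣ t := by
  rw [hq, zero_smul, add_zero] at hpq
  have h3 := pow_eq_smul_of hpq
  apply three_dvd_small hM _ hk t
  rcases hε with rfl | rfl
  · left; rw [h3]; simp
  · right; rw [h3]; simp

lemma three_dvd_qw {M : ℕ} (hM : M = 2 ∨ M = 3) (k0 εZ q' : ℤ) (t : ℕ)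
    (hk : (k0 : ZMod M) ≠ 0) (hε : εZ = 1 ∨ εZ = -1)
    (hq : ((q' : ZMod M)) = -(((εZ : ZMod M)) * ((k0 : ZMod M))))
    (hpq : genMat ((k0 : ZMod M)) ^ (t + 1)
      = ((εZ : ZMod M)) • genMat ((k0 : ZMod M)) + ((q' : ZMod M)) • 1) :
    3 ∣ (t + 2) := by
  rw [hq, neg_smul, ← sub_eq_add_neg] at hpq
  have h4 := pow_eq_neg_smul_of hpq
  apply three_dvd_small hM _ hk (t + 2)
  rcases hε with rfl | rfl
  · right; rw [h4]; simp
  · left; rw [h4]; simp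

lemma prime_pow_dvd_cases {p : ℕ} (hp : p.Prime) (a : ℕ) {x w : ℤ}
    (hw : ¬ (p : ℤ) ∣ w) (h : (p : ℤ) ^ a ∣ x * (x + w)) :
    (p : ℤ) ^ a ∣ x ∨ (p : ℤ) ^ a ∣ x + w := by
  have hpI : Prime (p : ℤ) := Nat.prime_iff_prime_int.mp hp
  by_cases hx : (p : ℤ) ∣ x
  · left
    have hxw : ¬ (p : ℤ) ∣ (x + w) := fun hd => hw (by simpa using dvd_sub hd hx)
    have hcop : IsCoprime ((p : ℤ) ^ a) (x + w) :=
      (hpI.coprime_iff_not_dvd.mpr hxw).pow_left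
    exact hcop.dvd_of_dvd_mul_right h
  · right
    have hcop : IsCoprime ((p : ℤ) ^ a) x := (hpI.coprime_iff_not_dvd.mpr hx).pow_left
    exact hcop.dvd_of_dvd_mul_left h

end Stmt14Aux


open Stmt14Aux in
/-- every integer `N = 2^n·3^m ≥ 2` is quasi monomially irreducible. -/
theorem stmt_14 (n m : ℕ) (h : 2 ≤ 2 ^ n * 3 ^ m) :
    QuasiMonomiallyIrreducible (2 ^ n * 3 ^ m) := by
  intro k0 hk0
  set N : ℕ := 2 ^ n * 3 ^ m with hNdef
  have hN2 : 2 ≤ N := h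
  haveI : NeZero N := ⟨by omega⟩
  haveI : Fact (1 < N) := ⟨by omega⟩
  -- basic coprimality facts
  have hpk : ∀ p : ℕ, p.Prime → (p : ℕ) ∣ N → ¬ (p : ℤ) ∣ k0 := by
    intro p hp hpN hdvd
    have h2 : (p : ℤ) ∣ (N : ℤ) := Int.natCast_dvd_natCast.mpr hpN
    have h3 := Int.dvd_gcd hdvd h2
    rw [hk0] at h3
    have h4 : (p : ℤ) ≤ 1 := Int.le_of_dvd one_pos (by exact_mod_cast h3)
    have h5 := hp.two_le
    omega
  have hkne : (k0 : ZMod N) ≠ 0 := by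
    intro h0
    have hdvd : (N : ℤ) ∣ k0 := by
      rwa [ZMod.intCast_zmod_eq_zero_iff_dvd] at h0
    have h3 := Int.dvd_gcd hdvd (dvd_refl (N : ℤ))
    rw [hk0] at h3
    have h4 : (N : ℤ) ≤ 1 := Int.le_of_dvd one_pos (by exact_mod_cast h3)
    omega
  -- solutions of replicate lists are powers
  have hIsSol : ∀ r : ℕ, (genMat (k0 : ZMod N) ^ r = 1 ∨ genMat (k0 : ZMod N) ^ r = -1) ↔
      IsSolutionE (List.replicate r ((k0 : ZMod N))) := by
    intro r
    simp only [IsSolutionE, Mword_replicate]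
  -- existence of a solution size
  have hne : {r : ℕ | 0 < r ∧ IsSolutionE (List.replicate r ((k0 : ZMod N)))}.Nonempty := by
    haveI : Invertible (genMat (k0 : ZMod N)) :=
      ⟨invG (k0 : ZMod N), invG_mul_genMat _, genMat_mul_invG _⟩
    let u := unitOfInvertible (genMat (k0 : ZMod N))
    have hpos : 0 < orderOf u := orderOf_pos u
    refine ⟨orderOf u, hpos, (hIsSol _).mp (Or.inl ?_)⟩
    have h1 := congrArg Units.val (pow_orderOf_eq_one u)
    rwa [Units.val_pow_eq_pow_val, Units.val_one] at h1
  have hsm : monomialSize N ((k0 : ZMod N)) =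
      sInf {r : ℕ | 0 < r ∧ IsSolutionE (List.replicate r ((k0 : ZMod N)))} := rfl
  set s := monomialSize N ((k0 : ZMod N)) with hsdef
  have hsmem : 0 < s ∧ IsSolutionE (List.replicate s ((k0 : ZMod N))) := by
    rw [hsm]; exact Nat.sInf_mem hne
  have hmin : ∀ r, 0 < r → IsSolutionE (List.replicate r ((k0 : ZMod N))) → s ≤ r := by
    intro r h1 h2
    rw [hsm]
    exact Nat.sInf_le ⟨h1, h2⟩
  -- s ≥ 3
  have hA01 : ∀ r : ℕ, (genMat (k0 : ZMod N) ^ r = 1 ∨ genMat (k0 : ZMod N) ^ r = -1) →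
      (genMat (k0 : ZMod N) ^ r) 0 1 = 0 := by
    rintro r (hr | hr) <;> rw [hr] <;> simp [Matrix.one_apply]
  have hs1 : ¬ IsSolutionE (List.replicate 1 ((k0 : ZMod N))) := by
    intro hr
    have h1 := hA01 1 ((hIsSol 1).mpr hr)
    rw [pow_one] at h1
    simp [genMat] at h1
  have hs2 : ¬ IsSolutionE (List.replicate 2 ((k0 : ZMod N))) := by
    intro hr
    have h1 := hA01 2 ((hIsSol 2).mpr hr)
    rw [pow_two] at h1
    simp [genMat, Matrix.mul_apply, Fin.sum_univ_two] at h1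
    exact hkne h1
  have hs3 : 3 ≤ s := by
    have e1 : s ≠ 1 := fun e => hs1 (e ▸ hsmem.2)
    have e2 : s ≠ 2 := fun e => hs2 (e ▸ hsmem.2)
    have e0 := hsmem.1
    omega
  have hmono : monoSol N ((k0 : ZMod N)) = List.replicate s ((k0 : ZMod N)) := rfl
  refine ⟨by rw [hmono]; exact hsmem.2, by rw [hmono]; simpa using hs3, ?_⟩
  intro hred
  rw [hmono] at hred
  obtain ⟨a, b, ha, hb, hbsol, htup⟩ := hred
  have hob : oplus a b = List.replicate s ((k0 : ZMod N)) := by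
    rcases htup with ⟨i, hi⟩ | ⟨i, hi⟩
    · rw [hi, List.rotate_replicate]
    · rw [hi, List.reverse_replicate, List.rotate_replicate]
  rcases b with _ | ⟨x, b'⟩
  · simp at hb
  have hb'ne : b' ≠ [] := by
    intro e; rw [e] at hb; simp at hb
  have hbdec : b' = b'.dropLast ++ [b'.getLast hb'ne] :=
    (List.dropLast_append_getLast hb'ne).symm
  have hmem : ∀ z ∈ oplus a (x :: b'), z = (k0 : ZMod N) := by
    rw [hob]; exact fun z hz => List.eq_of_mem_replicate hz
  have hmidk : b'.dropLast = List.replicate b'.dropLast.length ((k0 : ZMod N)) := by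
    apply List.eq_replicate_length.mpr
    intro z hz
    apply hmem
    have hL2 : ((x :: b').drop 1).dropLast = b'.dropLast := rfl
    exact List.mem_cons.mpr (Or.inr (List.mem_append_right _
      (List.mem_cons.mpr (Or.inr (by rw [hL2]; exact hz)))))
  set j := b'.dropLast.length with hjdef
  have hb'len : b'.length = j + 1 := by
    rw [hjdef, List.length_dropLast]
    have := List.length_pos_iff.mpr hb'ne
    omega
  have hlen := congrArg List.length hob
  simp only [oplus, List.length_cons, List.length_append, List.length_replicate,
    List.length_dropLast, List.length_drop] at hlen
  have hblen : 3 ≤ b'.length + 1 := by simpa using hb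
  have hjpos : 1 ≤ j := by omega
  have hjle : j + 3 ≤ s := by omega
  -- the word matrix of b
  have hMword : Mword (x :: b') =
      genMat (b'.getLast hb'ne) * (genMat (k0 : ZMod N) ^ j * genMat x) := by
    conv_lhs => rw [hbdec, hmidk]
    simp [Mword, List.reverse_append, List.map_append, List.map_replicate,
      List.prod_append, List.prod_cons, List.prod_replicate, List.reverse_replicate,
      mul_assoc]
  simp only [IsSolutionE] at hbsol
  rw [hMword] at hbsol
  -- extract the (0,0) entry of genMat k ^ j
  have hAj00 : (genMat (k0 : ZMod N) ^ j) 0 0 = 1 ∨ (genMat (k0 : ZMod N) ^ j) 0 0 = -1 := by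
    set y := b'.getLast hb'ne
    rcases hbsol with hη | hη
    · right
      have h1 := congrArg (fun X => invG y * X * invG x) hη
      rw [← mul_assoc (invG y), invG_mul_genMat, one_mul, mul_assoc, genMat_mul_invG,
        mul_one] at h1
      have h2 := congrArg (fun X : Matrix (Fin 2) (Fin 2) (ZMod N) => X 0 0) h1
      simpa [invG, Matrix.mul_apply, Fin.sum_univ_two] using h2
    · left
      have h1 := congrArg (fun X => invG y * X * invG x) hη
      rw [← mul_assoc (invG y), invG_mul_genMat, one_mul, mul_assoc, genMat_mul_invG,
        mul_one] at h1
      have h2 := congrArg (fun X : Matrix (Fin 2) (Fin 2) (ZMod N) => X 0 0) h1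
      simpa [invG, Matrix.mul_apply, Fin.sum_univ_two, Matrix.neg_apply] using h2
  obtain ⟨p, q, hpq⟩ := pow_genMat_span ((k0 : ZMod N)) j
  have hp : p = (genMat (k0 : ZMod N) ^ j) 0 0 := by
    have h1 : (genMat (k0 : ZMod N) ^ (j + 1)) 1 0 = (genMat (k0 : ZMod N) ^ j) 0 0 := by
      rw [pow_succ']
      simp [genMat, Matrix.mul_apply, Fin.sum_univ_two]
    have h2 : (genMat (k0 : ZMod N) ^ (j + 1)) 1 0 = p := by
      rw [hpq]
      simp [genMat, Matrix.add_apply, Matrix.smul_apply, Matrix.one_apply]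
    rw [h1] at h2; exact h2.symm
  obtain ⟨εZ, hεZ, hεZpm⟩ : ∃ εZ : ℤ,
      ((εZ : ℤ) : ZMod N) = (genMat (k0 : ZMod N) ^ j) 0 0 ∧ (εZ = 1 ∨ εZ = -1) := by
    rcases hAj00 with he | he
    · exact ⟨1, by rw [he]; simp, Or.inl rfl⟩
    · exact ⟨-1, by rw [he]; simp, Or.inr rfl⟩
  rw [hp, ← hεZ] at hpq
  have hε2 : ((εZ : ℤ) : ZMod N) * ((εZ : ℤ) : ZMod N) = 1 := by
    rcases hεZpm with rfl | rfl <;> norm_num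
  -- determinant gives the key quadratic relation
  have hdet : q * (q + ((εZ : ℤ) : ZMod N) * ((k0 : ℤ) : ZMod N)) = 0 := by
    have hd1 : (genMat (k0 : ZMod N) ^ (j + 1)).det = 1 := by
      rw [Matrix.det_pow]
      simp [genMat, Matrix.det_fin_two_of]
    have hform : ((εZ : ℤ) : ZMod N) • genMat (k0 : ZMod N) + q • (1 : Matrix (Fin 2) (Fin 2) (ZMod N)) =
        !![((εZ : ℤ) : ZMod N) * (k0 : ZMod N) + q, -((εZ : ℤ) : ZMod N);
           ((εZ : ℤ) : ZMod N), q] := by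
      ext i j'
      fin_cases i <;> fin_cases j' <;>
        simp [genMat, Matrix.smul_apply, Matrix.add_apply, Matrix.one_apply] <;> ring
    rw [hpq, hform, Matrix.det_fin_two_of] at hd1
    linear_combination hd1 - hε2
  obtain ⟨q', hq'⟩ : ∃ q' : ℤ, ((q' : ℤ) : ZMod N) = q :=
    ⟨(ZMod.cast q : ℤ), ZMod.intCast_zmod_cast q⟩
  rw [← hq'] at hpq hdet
  have hNdvd : (N : ℤ) ∣ q' * (q' + εZ * k0) := by
    rw [← ZMod.intCast_zmod_eq_zero_iff_dvd]
    push_cast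
    linear_combination hdet
  -- finishing moves
  have finish0 : ¬ ((N : ℤ) ∣ q') := by
    intro hd
    have hq0 : ((q' : ℤ) : ZMod N) = 0 := (ZMod.intCast_zmod_eq_zero_iff_dvd _ _).mpr hd
    rw [hq0, zero_smul, add_zero] at hpq
    have h3 := pow_eq_smul_of hpq
    have hsol : genMat (k0 : ZMod N) ^ j = 1 ∨ genMat (k0 : ZMod N) ^ j = -1 := by
      rcases hεZpm with rfl | rfl
      · left; simpa using h3
      · right; simpa using h3
    have := hmin j (by omega) ((hIsSol j).mp hsol)
    omega
  have finishw : ¬ ((N : ℤ) ∣ q' + εZ * k0) := by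
    intro hd
    have hq0 : ((q' : ℤ) : ZMod N) = -(((εZ : ℤ) : ZMod N) * ((k0 : ℤ) : ZMod N)) := by
      have h0 : (((q' + εZ * k0 : ℤ)) : ZMod N) = 0 :=
        (ZMod.intCast_zmod_eq_zero_iff_dvd _ _).mpr hd
      push_cast at h0
      linear_combination h0
    rw [hq0, neg_smul, ← sub_eq_add_neg] at hpq
    have h4 := pow_eq_neg_smul_of hpq
    have hsol : genMat (k0 : ZMod N) ^ (j + 2) = 1 ∨ genMat (k0 : ZMod N) ^ (j + 2) = -1 := by
      rcases hεZpm with rfl | rfl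
      · right; simpa using h4
      · left; simpa using h4
    have := hmin (j + 2) (by omega) ((hIsSol _).mp hsol)
    omega
  -- prime power splittings
  have hwdvd : ∀ p : ℕ, p.Prime → (p : ℕ) ∣ N → ¬ (p : ℤ) ∣ εZ * k0 := by
    intro p hp hpN hd
    apply hpk p hp hpN
    rcases hεZpm with rfl | rfl
    · simpa using hd
    · rw [neg_one_mul, dvd_neg] at hd; exact hd
  have h2dvd : (2 : ℤ) ^ n ∣ q' ∨ (2 : ℤ) ^ n ∣ q' + εZ * k0 := by
    rcases Nat.eq_zero_or_pos n with rfl | hn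
    · left; simpa using one_dvd _
    · have hd2N : (2 : ℕ) ∣ N := by
        rw [hNdef]; exact Dvd.dvd.mul_right (dvd_pow_self 2 hn.ne') _
      apply prime_pow_dvd_cases Nat.prime_two
      · exact_mod_cast hwdvd 2 Nat.prime_two hd2N
      · refine dvd_trans ⟨(3 : ℤ) ^ m, ?_⟩ hNdvd
        rw [hNdef]; push_cast; ring
  have h3dvd : (3 : ℤ) ^ m ∣ q' ∨ (3 : ℤ) ^ m ∣ q' + εZ * k0 := by
    rcases Nat.eq_zero_or_pos m with rfl | hm
    · left; simpa using one_dvd _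
    · have hd3N : (3 : ℕ) ∣ N := by
        rw [hNdef]; exact Dvd.dvd.mul_left (dvd_pow_self 3 hm.ne') _
      apply prime_pow_dvd_cases Nat.prime_three
      · exact_mod_cast hwdvd 3 Nat.prime_three hd3N
      · refine dvd_trans ⟨(2 : ℤ) ^ n, ?_⟩ hNdvd
        rw [hNdef]; push_cast; ring
  have hNeq : (N : ℤ) = (2 : ℤ) ^ n * (3 : ℤ) ^ m := by rw [hNdef]; push_cast; ring
  have hcop23 : IsCoprime ((2 : ℤ) ^ n) ((3 : ℤ) ^ m) := by
    apply IsCoprime.pow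
    exact Int.isCoprime_iff_gcd_eq_one.mpr (by decide)
  -- mixed-case helpers (mod 2 and mod 3)
  have hmix2 : 0 < n → ∀ r : ℕ,
      ((2 : ℤ) ∣ q' → genMat ((k0 : ZMod 2)) ^ (j + 1) =
        ((εZ : ℤ) : ZMod 2) • genMat ((k0 : ZMod 2)) + ((q' : ℤ) : ZMod 2) • 1 → True) := by
    intro _ r _; exact fun _ => trivial
  clear hmix2
  rcases h2dvd with h2 | h2 <;> rcases h3dvd with h3 | h3
  · exact finish0 (by rw [hNeq]; exact hcop23.mul_dvd h2 h3)
  · -- 2^n ∣ q', 3^m ∣ q' + w : mixed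
    rcases Nat.eq_zero_or_pos n with rfl | hn
    · exact finishw (by rw [hNeq]; simpa using h3)
    rcases Nat.eq_zero_or_pos m with rfl | hm
    · exact finish0 (by rw [hNeq]; simpa using h2)
    have hd2N : (2 : ℕ) ∣ N := by
      rw [hNdef]; exact Dvd.dvd.mul_right (dvd_pow_self 2 hn.ne') _
    have hd3N : (3 : ℕ) ∣ N := by
      rw [hNdef]; exact Dvd.dvd.mul_left (dvd_pow_self 3 hm.ne') _
    have hk2ne : ((k0 : ℤ) : ZMod 2) ≠ 0 := by
      intro h0
      exact hpk 2 Nat.prime_two hd2N (by exact_mod_cast (ZMod.intCast_zmod_eq_zero_iff_dvd k0 2).mp h0)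
    have hk3ne : ((k0 : ℤ) : ZMod 3) ≠ 0 := by
      intro h0
      exact hpk 3 Nat.prime_three hd3N (by exact_mod_cast (ZMod.intCast_zmod_eq_zero_iff_dvd k0 3).mp h0)
    have hrel2 := cast_rel hd2N k0 εZ q' j hpq
    have hrel3 := cast_rel hd3N k0 εZ q' j hpq
    have hq2 : ((q' : ℤ) : ZMod 2) = 0 := by
      rw [ZMod.intCast_zmod_eq_zero_iff_dvd]
      exact_mod_cast dvd_trans (dvd_pow_self (2 : ℤ) hn.ne') h2
    have hq3 : ((q' : ℤ) : ZMod 3) = -(((εZ : ℤ) : ZMod 3) * ((k0 : ℤ) : ZMod 3)) := by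
      have h0 : (((q' + εZ * k0 : ℤ)) : ZMod 3) = 0 := by
        rw [ZMod.intCast_zmod_eq_zero_iff_dvd]
        exact_mod_cast dvd_trans (dvd_pow_self (3 : ℤ) hm.ne') h3
      push_cast at h0
      linear_combination h0
    have hj3 := three_dvd_q0 (Or.inl rfl) k0 εZ q' j hk2ne hεZpm hq2 hrel2
    have hj3' := three_dvd_qw (Or.inr rfl) k0 εZ q' j hk3ne hεZpm hq3 hrel3
    omega
  · -- 2^n ∣ q' + w, 3^m ∣ q' : mixed
    rcases Nat.eq_zero_or_pos n with rfl | hn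
    · exact finish0 (by rw [hNeq]; simpa using h3)
    rcases Nat.eq_zero_or_pos m with rfl | hm
    · exact finishw (by rw [hNeq]; simpa using h2)
    have hd2N : (2 : ℕ) ∣ N := by
      rw [hNdef]; exact Dvd.dvd.mul_right (dvd_pow_self 2 hn.ne') _
    have hd3N : (3 : ℕ) ∣ N := by
      rw [hNdef]; exact Dvd.dvd.mul_left (dvd_pow_self 3 hm.ne') _
    have hk2ne : ((k0 : ℤ) : ZMod 2) ≠ 0 := by
      intro h0
      exact hpk 2 Nat.prime_two hd2N (by exact_mod_cast (ZMod.intCast_zmod_eq_zero_iff_dvd k0 2).mp h0)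
    have hk3ne : ((k0 : ℤ) : ZMod 3) ≠ 0 := by
      intro h0
      exact hpk 3 Nat.prime_three hd3N (by exact_mod_cast (ZMod.intCast_zmod_eq_zero_iff_dvd k0 3).mp h0)
    have hrel2 := cast_rel hd2N k0 εZ q' j hpq
    have hrel3 := cast_rel hd3N k0 εZ q' j hpq
    have hq3 : ((q' : ℤ) : ZMod 3) = 0 := by
      rw [ZMod.intCast_zmod_eq_zero_iff_dvd]
      exact_mod_cast dvd_trans (dvd_pow_self (3 : ℤ) hm.ne') h3
    have hq2 : ((q' : ℤ) : ZMod 2) = -(((εZ : ℤ) : ZMod 2) * ((k0 : ℤ) : ZMod 2)) := by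
      have h0 : (((q' + εZ * k0 : ℤ)) : ZMod 2) = 0 := by
        rw [ZMod.intCast_zmod_eq_zero_iff_dvd]
        exact_mod_cast dvd_trans (dvd_pow_self (2 : ℤ) hn.ne') h2
      push_cast at h0
      linear_combination h0
    have hj3 := three_dvd_q0 (Or.inr rfl) k0 εZ q' j hk3ne hεZpm hq3 hrel3
    have hj3' := three_dvd_qw (Or.inl rfl) k0 εZ q' j hk2ne hεZpm hq2 hrel2
    omega
  · exact finishw (by rw [hNeq]; exact hcop23.mul_dvd h2 h3)
end

section
/- Let p be an odd prime, n ≥ 2, 1 ≤ k ≤ n−1, and let a be an integer coprime to p. Then the (a·p^k mod p^n)-monomial minimal solution of (E_{p^n}) has size 2·p^{n−k} and satisfies M_{2p^{n−k}}(a·p^k, …, a·p^k) = −Id over Z/p^nZ. Moreover, setting x = a·p^k − 2a·p^{n−1}, one has M_{4p^{n−k−1}}(x, a·p^k, …, a·p^k, x) = Id over Z/p^nZ, where the tuple has first and last entries x and 4p^{n−k−1} − 2 middle entries equal to a·p^k. -/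
open Matrix

section AuxNT

-- v_p(j) ≤ j - 1
lemma fact_le_pred {p : ℕ} (hp : p.Prime) (j : ℕ) (hj : 1 ≤ j) : j.factorization p ≤ j - 1 := by
  have h1 : p ^ j.factorization p ∣ j := Nat.ordProj_dvd j p
  have h2 : p ^ j.factorization p ≤ j := Nat.le_of_dvd (by omega) h1
  have h3 : j.factorization p < p ^ j.factorization p :=
    Nat.lt_pow_self hp.one_lt
  omega

lemma three_pow (e : ℕ) (he : 1 ≤ e) : e + 2 ≤ 3 ^ e := by
  induction e with
  | zero => omega
  | succ m ih =>
    rcases Nat.eq_zero_or_pos m with h | h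
    · subst h; norm_num
    · have := ih (by omega)
      have : 3 ^ m ≥ m + 2 := this
      calc m + 1 + 2 ≤ 3 ^ m + 3 ^ m + 3 ^ m := by
            have : 1 ≤ 3 ^ m := Nat.one_le_pow _ _ (by norm_num)
            omega
        _ = 3 ^ (m + 1) := by ring

-- for odd p, v_p(j) ≤ j - 2 when j ≥ 2
lemma fact_le_sub_two {p : ℕ} (hp : p.Prime) (hodd : Odd p) (j : ℕ) (hj : 2 ≤ j) :
    j.factorization p ≤ j - 2 := by
  set e := j.factorization p with he
  rcases Nat.eq_zero_or_pos e with h | h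
  · omega
  · have hp3 : 3 ≤ p := by
      have h2' := hp.two_le
      have : p ≠ 2 := by rintro rfl; exact (by decide : ¬ Odd 2) hodd
      omega
    have h1 : p ^ e ∣ j := Nat.ordProj_dvd j p
    have h2 : p ^ e ≤ j := Nat.le_of_dvd (by omega) h1
    have h3 : 3 ^ e ≤ p ^ e := Nat.pow_le_pow_left hp3 e
    have h4 := three_pow e h
    omega

-- p^α ∣ t → p^(α - v_p j) ∣ choose t j
lemma pow_dvd_choose' {p : ℕ} (hp : p.Prime) {α t j : ℕ} (ht : p ^ α ∣ t) (hj : 1 ≤ j) :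
    p ^ (α - j.factorization p) ∣ t.choose j := by
  rcases Nat.lt_or_ge t j with h | h
  · simp [Nat.choose_eq_zero_of_lt h]
  · set e := j.factorization p with he
    rcases le_or_gt α e with hle | hlt
    · have : α - e = 0 := by omega
      simp [this]
    · have hident : t * (t - 1).choose (j - 1) = t.choose j * j := by
        have := Nat.add_one_mul_choose_eq (t - 1) (j - 1)
        have h1 : t - 1 + 1 = t := by omega
        have h2 : j - 1 + 1 = j := by omega
        rw [h1, h2] at this
        exact this
      have hd : p ^ α ∣ t.choose j * j := hident ▸ Dvd.dvd.mul_right ht _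
      have hm : j = p ^ e * (j / p ^ e) := (Nat.ordProj_mul_ordCompl_eq_self j p).symm
      have hcop : Nat.Coprime p (j / p ^ e) := Nat.coprime_ordCompl hp (by omega)
      have hα : α = (α - e) + e := by omega
      rw [hα, pow_add] at hd
      nth_rewrite 2 [hm] at hd
      have hd2 : p ^ (α - e) * p ^ e ∣ (t.choose j * (j / p ^ e)) * p ^ e := by
        calc p ^ (α - e) * p ^ e ∣ t.choose j * (p ^ e * (j / p ^ e)) := hd
          _ = (t.choose j * (j / p ^ e)) * p ^ e := by ring
      have hd3 : p ^ (α - e) ∣ t.choose j * (j / p ^ e) :=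
        (Nat.mul_dvd_mul_iff_right (Nat.pow_pos hp.pos)).mp hd2
      exact (Nat.Coprime.dvd_of_dvd_mul_right
        (Nat.Coprime.pow_left _ hcop) hd3)

lemma key_dvd {p : ℕ} (hp : p.Prime) {M α t j k : ℕ} (ht : p ^ α ∣ t) (hj : 1 ≤ j)
    (hM : M ≤ α - j.factorization p + j * k) : p ^ M ∣ t.choose j * p ^ (j * k) := by
  have h1 := pow_dvd_choose' hp ht hj
  have h2 : p ^ (α - j.factorization p + j * k) ∣ t.choose j * p ^ (j * k) := by
    rw [pow_add]; exact mul_dvd_mul h1 dvd_rfl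
  exact dvd_trans (pow_dvd_pow p hM) h2

lemma dvd_case1 {p n k : ℕ} (hp : p.Prime) (hk1 : 1 ≤ k) {j : ℕ} (hj : 1 ≤ j) :
    p ^ n ∣ (p ^ (n - k)).choose j * p ^ (j * k) := by
  apply key_dvd hp (dvd_refl (p ^ (n - k))) hj
  have he : j.factorization p ≤ j - 1 := fact_le_pred hp j hj
  have hX : j - 1 ≤ (j - 1) * k := Nat.le_mul_of_pos_right _ (by omega)
  have hjk : j * k = (j - 1) * k + k := by
    rw [Nat.sub_one_mul]
    have : k ≤ j * k := Nat.le_mul_of_pos_left _ (by omega)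
    omega
  rw [hjk]
  generalize (j - 1) * k = X at hX ⊢
  omega

lemma dvd_case3 {p n k : ℕ} (hp : p.Prime) (hodd : Odd p) (hk1 : 1 ≤ k) {j : ℕ} (hj : 2 ≤ j) :
    p ^ n ∣ (2 * p ^ (n - k - 1)).choose j * p ^ (j * k) := by
  apply key_dvd hp (Dvd.dvd.mul_left (dvd_refl (p ^ (n - k - 1))) 2) (by omega)
  have he : j.factorization p ≤ j - 2 := fact_le_sub_two hp hodd j hj
  have hX : j - 1 ≤ (j - 1) * k := Nat.le_mul_of_pos_right _ (by omega)
  have hjk : j * k = (j - 1) * k + k := by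
    rw [Nat.sub_one_mul]
    have : k ≤ j * k := Nat.le_mul_of_pos_left _ (by omega)
    omega
  rw [hjk]
  generalize (j - 1) * k = X at hX ⊢
  omega

lemma dvd_case2 {p k : ℕ} (hp : p.Prime) (hodd : Odd p) (hk1 : 1 ≤ k) {t j : ℕ} (hj : 2 ≤ j) :
    p ^ (t.factorization p + 2 * k) ∣ t.choose j * p ^ (j * k) := by
  apply key_dvd hp (Nat.ordProj_dvd t p) (by omega)
  have he : j.factorization p ≤ j - 2 := fact_le_sub_two hp hodd j hj
  have hX : j - 2 ≤ (j - 2) * k := Nat.le_mul_of_pos_right _ (by omega)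
  have hjk : j * k = (j - 2) * k + 2 * k := by
    have h2 : j - 2 + 2 = j := by omega
    calc j * k = (j - 2 + 2) * k := by rw [h2]
      _ = (j - 2) * k + 2 * k := by ring
  rw [hjk]
  generalize (j - 2) * k = X at hX ⊢
  omega

lemma coeff_factor {p n k : ℕ} (hp : p.Prime) (hodd : Odd p) (hk1 : 1 ≤ k)
    {t j : ℕ} (ht : 0 < t) (hj : 2 ≤ j) :
    ∃ z : ZMod (p ^ n), ((t.choose j : ℕ) : ZMod (p ^ n)) * ((p : ZMod (p ^ n)) ^ (j * k))
      = ((t : ℕ) : ZMod (p ^ n)) * (p : ZMod (p ^ n)) ^ (2 * k) * z := by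
  set v := t.factorization p with hv
  have key := dvd_case2 (k := k) hp hodd hk1 (t := t) hj
  rcases le_or_gt n (v + 2 * k) with hc | hc
  · refine ⟨0, ?_⟩
    have h0 : ((t.choose j * p ^ (j * k) : ℕ) : ZMod (p ^ n)) = 0 := by
      rw [ZMod.natCast_eq_zero_iff]
      exact dvd_trans (pow_dvd_pow p hc) key
    push_cast at h0
    rw [h0, mul_zero]
  · obtain ⟨w, hw⟩ := key
    have hm : p ^ v * (t / p ^ v) = t := Nat.ordProj_mul_ordCompl_eq_self t p
    set m := t / p ^ v with hmd
    have hcop : Nat.Coprime m (p ^ n) :=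
      Nat.Coprime.pow_right _ ((Nat.coprime_ordCompl hp (by omega)).symm)
    have hunit : IsUnit ((m : ℕ) : ZMod (p ^ n)) := (ZMod.isUnit_iff_coprime m (p ^ n)).mpr hcop
    obtain ⟨u, hu⟩ := hunit
    refine ⟨(↑u⁻¹ : ZMod (p ^ n)) * ((w : ℕ) : ZMod (p ^ n)), ?_⟩
    have hcastw : ((t.choose j * p ^ (j * k) : ℕ) : ZMod (p ^ n))
        = ((p ^ (v + 2 * k) * w : ℕ) : ZMod (p ^ n)) := by rw [hw]
    push_cast at hcastw
    rw [hcastw]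
    have hcast_t : ((t : ℕ) : ZMod (p ^ n)) = (p : ZMod (p ^ n)) ^ v * (m : ZMod (p ^ n)) := by
      rw [← hm]; push_cast; ring
    rw [hcast_t]
    have hmu : (m : ZMod (p ^ n)) * (↑u⁻¹ : ZMod (p ^ n)) = 1 := by
      rw [← hu]; exact_mod_cast u.mul_inv
    calc (p : ZMod (p^n)) ^ (v + 2*k) * (w : ZMod (p^n))
        = (p : ZMod (p^n)) ^ v * (p : ZMod (p^n)) ^ (2*k) * ((m : ZMod (p^n)) * ↑u⁻¹) * w := by
          rw [hmu, pow_add]; ring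
      _ = (p : ZMod (p^n)) ^ v * (m : ZMod (p^n)) * (p : ZMod (p^n)) ^ (2*k) * (↑u⁻¹ * (w : ZMod (p^n))) := by ring

end AuxNT

section AuxMat

variable {N : ℕ}

lemma Mword_replicate (m : ℕ) (x : ZMod N) : Mword (List.replicate m x) = genMat x ^ m := by
  rw [Mword, List.reverse_replicate, List.map_replicate, List.prod_replicate]

lemma genMat_sq_s16 (c : ZMod N) : genMat c ^ 2 = c • genMat c - 1 := by
  ext i j
  fin_cases i <;> fin_cases j <;>
    simp [genMat, pow_two, Matrix.mul_apply, Fin.sum_univ_two, Matrix.one_apply] <;> ring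

lemma upow_expand (c : ZMod N) (t : ℕ) :
    (1 - c • genMat c) ^ t
      = ∑ j ∈ Finset.range (t + 1), ((t.choose j : ZMod N) * (-c) ^ j) • (genMat c) ^ j := by
  have h : (1 : Matrix (Fin 2) (Fin 2) (ZMod N)) - c • genMat c = (-c) • genMat c + 1 := by
    rw [neg_smul]; abel
  rw [h, Commute.add_pow (Commute.one_right _)]
  refine Finset.sum_congr rfl fun j _ => ?_
  rw [one_pow, mul_one, smul_pow, mul_smul]
  rw [← (Nat.cast_commute (t.choose j) ((-c) ^ j • (genMat c) ^ j)).eq]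
  rw [← nsmul_eq_mul, ← Nat.cast_smul_eq_nsmul (ZMod N)]

lemma genMat_apply_10 (c : ZMod N) : genMat c 1 0 = 1 := by simp [genMat]

lemma Mword_sandwich (x c : ZMod N) (r : ℕ) :
    Mword (x :: (List.replicate r c ++ [x]))
      = genMat x * ((genMat c) ^ r * genMat x) := by
  rw [Mword, List.reverse_cons, List.reverse_append, List.reverse_replicate]
  simp only [List.reverse_cons, List.reverse_nil, List.nil_append, List.map_append,
    List.map_cons, List.map_replicate, List.prod_append, List.prod_cons, List.prod_nil,
    List.singleton_append, List.prod_replicate, mul_one, List.map_nil, mul_assoc]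

end AuxMat
/-- for `p` an odd prime, `n ≥ 2`, `1 ≤ k ≤ n - 1` and `a` coprime to `p`,
the `(a·p^k mod p^n)`-monomial minimal solution of `(E_{p^n})` has size `2·p^(n-k)`, its
matrix is `-Id`, and with `x = a·p^k - 2a·p^(n-1)`, the `4p^(n-k-1)`-tuple
`(x, a·p^k, …, a·p^k, x)` has matrix `Id` over `ZMod (p^n)`. -/
theorem stmt_16 (p : ℕ) (hp : p.Prime) (hodd : Odd p) (n : ℕ) (hn : 2 ≤ n)
    (k : ℕ) (hk1 : 1 ≤ k) (hk2 : k ≤ n - 1) (a : ℤ) (ha : Int.gcd a (p : ℤ) = 1) :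
    monomialSize (p ^ n) ((a * p ^ k : ℤ) : ZMod (p ^ n)) = 2 * p ^ (n - k) ∧
    Mword (List.replicate (2 * p ^ (n - k)) ((a * p ^ k : ℤ) : ZMod (p ^ n))) = -1 ∧
    Mword (((a * p ^ k - 2 * a * p ^ (n - 1) : ℤ) : ZMod (p ^ n)) ::
      (List.replicate (4 * p ^ (n - k - 1) - 2) ((a * p ^ k : ℤ) : ZMod (p ^ n)) ++
        [((a * p ^ k - 2 * a * p ^ (n - 1) : ℤ) : ZMod (p ^ n))])) = 1 := by
  have hppos : 0 < p := hp.pos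
  have hp2 : 2 ≤ p := hp.two_le
  have hpnz : p ^ n ≠ 0 := pow_ne_zero _ (by omega)
  haveI : NeZero (p ^ n) := ⟨hpnz⟩
  haveI : Fact p.Prime := ⟨hp⟩
  set c : ZMod (p ^ n) := ((a * p ^ k : ℤ) : ZMod (p ^ n)) with hcdef
  set A : Matrix (Fin 2) (Fin 2) (ZMod (p ^ n)) := genMat c with hAdef
  set ca : ZMod (p ^ n) := ((a : ℤ) : ZMod (p ^ n)) with hcadef
  set cp : ZMod (p ^ n) := ((p : ℕ) : ZMod (p ^ n)) with hcpdef
  have hc : c = ca * cp ^ k := by rw [hcdef, hcadef, hcpdef]; push_cast; ring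
  have hcj : ∀ j : ℕ, c ^ j = ca ^ j * cp ^ (j * k) := by
    intro j
    rw [hc, mul_pow, ← pow_mul, mul_comm k j]
  have hcpn : cp ^ n = 0 := by
    rw [hcpdef, ← Nat.cast_pow, ZMod.natCast_self]
  have hcnil : IsNilpotent c := by
    refine ⟨n, ?_⟩
    rw [hcj n]
    have h2 : cp ^ (n * k) = 0 := by
      have h1 : n * k = n + (n * k - n) := by
        have : n ≤ n * k := Nat.le_mul_of_pos_right _ (by omega)
        omega
      rw [h1, pow_add, hcpn, zero_mul]
    rw [h2, mul_zero]
  have hG1coeff : ∀ j : ℕ, 1 ≤ j → (((p ^ (n - k)).choose j : ℕ) : ZMod (p ^ n)) * c ^ j = 0 := by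
    intro j hj
    have h0 : (((p ^ (n - k)).choose j * p ^ (j * k) : ℕ) : ZMod (p ^ n)) = 0 := by
      rw [ZMod.natCast_eq_zero_iff]
      exact dvd_case1 hp hk1 hj
    push_cast at h0
    rw [← hcpdef] at h0
    rw [hcj j]
    calc (((p ^ (n - k)).choose j : ℕ) : ZMod (p ^ n)) * (ca ^ j * cp ^ (j * k))
        = ((((p ^ (n - k)).choose j : ℕ) : ZMod (p ^ n)) * cp ^ (j * k)) * ca ^ j := by ring
      _ = 0 * ca ^ j := by rw [h0]
      _ = 0 := zero_mul _
  have hG1 : (1 - c • A) ^ (p ^ (n - k)) = 1 := by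
    rw [hAdef, upow_expand, ← hAdef]
    rw [Finset.sum_eq_single_of_mem 0 (Finset.mem_range.mpr (by omega))]
    · simp
    · intro j hjmem hj
      have h1 : ((p ^ (n - k)).choose j : ZMod (p ^ n)) * (-c) ^ j = 0 := by
        rw [neg_pow]
        calc ((p ^ (n - k)).choose j : ZMod (p ^ n)) * ((-1) ^ j * c ^ j)
            = (((p ^ (n - k)).choose j : ℕ) : ZMod (p ^ n)) * c ^ j * (-1) ^ j := by ring
          _ = 0 := by rw [hG1coeff j (by omega), zero_mul]
      rw [h1, zero_smul]
  have hA2 : A ^ 2 = -(1 - c • A) := by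
    rw [hAdef, genMat_sq_s16, neg_sub]
  have hoddpnk : Odd (p ^ (n - k)) := hodd.pow
  have hmain2 : A ^ (2 * p ^ (n - k)) = -1 := by
    rw [pow_mul, hA2, hoddpnk.neg_pow, hG1]
  -- parity obstruction
  have hodd_impossible : ∀ m : ℕ, Odd m → ¬(A ^ m = 1 ∨ A ^ m = -1) := by
    intro m hm hsol
    have hpdvd : p ∣ p ^ n := dvd_pow_self p (by omega : n ≠ 0)
    set φ : ZMod (p ^ n) →+* ZMod p := ZMod.castHom hpdvd (ZMod p) with hφ
    have hφc : φ c = 0 := by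
      rw [hcdef, map_intCast, ZMod.intCast_zmod_eq_zero_iff_dvd]
      exact dvd_mul_of_dvd_right (dvd_pow_self (p : ℤ) (by omega : k ≠ 0)) a
    have hmap : φ.mapMatrix A = genMat (0 : ZMod p) := by
      ext i j
      fin_cases i <;> fin_cases j <;>
        simp [hAdef, genMat, RingHom.mapMatrix_apply, Matrix.map_apply, hφc]
    set J : Matrix (Fin 2) (Fin 2) (ZMod p) := genMat (0 : ZMod p) with hJ
    have hJ2 : J ^ 2 = -1 := by rw [hJ, genMat_sq_s16]; simp
    obtain ⟨s, hs⟩ := hm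
    have hJm : (J ^ m) 0 0 = 0 := by
      rw [hs, pow_add, pow_mul, hJ2, pow_one]
      rcases Nat.even_or_odd s with hse | hso
      · rw [hse.neg_one_pow, one_mul]
        simp [hJ, genMat]
      · rw [hso.neg_one_pow, neg_one_mul, Matrix.neg_apply]
        simp [hJ, genMat]
    have hcontr : (1 : ZMod p) = 0 ∨ (-1 : ZMod p) = 0 := by
      rcases hsol with h | h
      · left
        have h2 := congrArg (fun M => (φ.mapMatrix M) 0 0) h
        simp only [map_pow, hmap, _root_.map_one] at h2
        rw [hJm] at h2
        simpa [Matrix.one_apply] using h2.symm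
      · right
        have h2 := congrArg (fun M => (φ.mapMatrix M) 0 0) h
        simp only [map_pow, hmap, map_neg, _root_.map_one] at h2
        rw [hJm] at h2
        simpa [Matrix.neg_apply, Matrix.one_apply] using h2.symm
    rcases hcontr with h | h
    · exact one_ne_zero h
    · exact one_ne_zero (neg_eq_zero.mp h)
  -- lower bound
  have hLB : ∀ m : ℕ, 0 < m → (A ^ m = 1 ∨ A ^ m = -1) → 2 * p ^ (n - k) ≤ m := by
    intro m hmpos hsol
    have hev : Even m := by
      by_contra hodd'
      exact hodd_impossible m (Nat.not_even_iff_odd.mp hodd') hsol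
    obtain ⟨t, ht⟩ := hev
    have htm : m = 2 * t := by omega
    have htpos : 0 < t := by omega
    have hu : (1 - c • A) ^ t = 1 ∨ (1 - c • A) ^ t = -1 := by
      have h1 : A ^ m = (-1 : Matrix (Fin 2) (Fin 2) (ZMod (p ^ n))) ^ t * (1 - c • A) ^ t := by
        rw [htm, pow_mul, hA2, neg_pow]
      rcases Nat.even_or_odd t with hte | hto
      · rw [hte.neg_one_pow, one_mul] at h1
        rw [← h1]; exact hsol
      · rw [hto.neg_one_pow, neg_one_mul] at h1
        rcases hsol with h | h
        · right
          rw [h] at h1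
          exact neg_eq_iff_eq_neg.mp h1.symm
        · left
          rw [h] at h1
          exact neg_inj.mp h1.symm
    have h10 : ((1 - c • A) ^ t) 1 0 = 0 := by
      rcases hu with h | h <;> rw [h] <;>
        simp [Matrix.one_apply, Matrix.neg_apply]
    rw [hAdef, upow_expand, ← hAdef] at h10
    have h10' : ∑ j ∈ Finset.range (t + 1),
        ((t.choose j : ZMod (p ^ n)) * (-c) ^ j) * ((A ^ j) 1 0) = 0 := by
      rw [← h10, Matrix.sum_apply]
      refine Finset.sum_congr rfl fun j _ => ?_
      rw [Matrix.smul_apply, smul_eq_mul]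
    rw [Finset.range_eq_Ico,
      ← Finset.sum_Ico_consecutive _ (Nat.zero_le 2) (by omega : 2 ≤ t + 1)] at h10'
    have hfirst : ∑ j ∈ Finset.Ico 0 2,
        ((t.choose j : ZMod (p ^ n)) * (-c) ^ j) * ((A ^ j) 1 0)
        = -((t : ZMod (p ^ n)) * c) := by
      rw [← Finset.range_eq_Ico, Finset.sum_range_succ, Finset.sum_range_one]
      have e0 : ((A ^ 0) : Matrix (Fin 2) (Fin 2) (ZMod (p ^ n))) 1 0 = 0 := by
        rw [pow_zero]; simp [Matrix.one_apply]
      have e1 : ((A ^ 1) : Matrix (Fin 2) (Fin 2) (ZMod (p ^ n))) 1 0 = 1 := by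
        rw [pow_one, hAdef]; exact genMat_apply_10 c
      rw [e0, e1]
      simp [Nat.choose_one_right]
    have hS : ∑ j ∈ Finset.Ico 2 (t + 1),
        ((t.choose j : ZMod (p ^ n)) * (-c) ^ j) * ((A ^ j) 1 0)
        ∈ Ideal.span {(t : ZMod (p ^ n)) * c ^ 2} := by
      refine Ideal.sum_mem _ fun j hj => ?_
      have hj2 : 2 ≤ j := (Finset.mem_Ico.mp hj).1
      rw [Ideal.mem_span_singleton']
      obtain ⟨z, hz⟩ := coeff_factor (n := n) (k := k) hp hodd hk1 htpos hj2
      rw [← hcpdef] at hz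
      refine ⟨z * ca ^ (j - 2) * (-1) ^ j * ((A ^ j) 1 0), ?_⟩
      have hj22 : j - 2 + 2 = j := by omega
      rw [neg_pow c, hcj j, hcj 2]
      have hcaj : ca ^ j = ca ^ (j - 2) * ca ^ 2 := by rw [← pow_add, hj22]
      rw [hcaj]
      calc z * ca ^ (j - 2) * (-1) ^ j * ((A ^ j) 1 0) *
            ((t : ZMod (p ^ n)) * (ca ^ 2 * cp ^ (2 * k)))
          = ((t : ZMod (p ^ n)) * cp ^ (2 * k) * z) * (ca ^ (j - 2) * ca ^ 2) * (-1) ^ j *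
              ((A ^ j) 1 0) := by ring
        _ = ((t.choose j : ZMod (p ^ n)) * cp ^ (j * k)) * (ca ^ (j - 2) * ca ^ 2) * (-1) ^ j *
              ((A ^ j) 1 0) := by rw [← hz]
        _ = (t.choose j : ZMod (p ^ n)) * ((-1) ^ j * (ca ^ (j - 2) * ca ^ 2 * cp ^ (j * k))) *
              ((A ^ j) 1 0) := by ring
    obtain ⟨w, hw⟩ := Ideal.mem_span_singleton'.mp hS
    rw [hfirst, ← hw] at h10'
    have htc0 : (t : ZMod (p ^ n)) * c = 0 := by
      have heq : ((t : ZMod (p ^ n)) * c) * (1 - w * c) = 0 := by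
        linear_combination -h10'
      have hnil : IsNilpotent (w * c) := by
        obtain ⟨r, hr⟩ := hcnil
        exact ⟨r, by rw [mul_pow, hr, mul_zero]⟩
      have hunit : IsUnit (1 - w * c) := IsNilpotent.isUnit_one_sub hnil
      obtain ⟨v, hv⟩ := hunit
      have h3 := congrArg (fun x => x * (↑v⁻¹ : ZMod (p ^ n))) heq
      simp only [zero_mul] at h3
      rw [mul_assoc, ← hv, Units.mul_inv, mul_one] at h3
      exact h3
    have hdvdZ : ((p ^ n : ℕ) : ℤ) ∣ (t : ℤ) * (a * (p : ℤ) ^ k) := by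
      rw [← ZMod.intCast_zmod_eq_zero_iff_dvd]
      have h4 : (((t : ℤ) * (a * (p : ℤ) ^ k) : ℤ) : ZMod (p ^ n))
          = (t : ZMod (p ^ n)) * c := by
        rw [hcdef]; push_cast; ring
      rw [h4, htc0]
    have hdvd2 : (p : ℤ) ^ (n - k) ∣ (t : ℤ) := by
      have hcop : IsCoprime ((p : ℤ) ^ n) a :=
        ((Int.isCoprime_iff_gcd_eq_one.mpr ha).symm.pow_left)
      have h5 : (p : ℤ) ^ n ∣ a * ((t : ℤ) * (p : ℤ) ^ k) := by
        push_cast at hdvdZ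
        calc (p : ℤ) ^ n ∣ (t : ℤ) * (a * (p : ℤ) ^ k) := hdvdZ
          _ = a * ((t : ℤ) * (p : ℤ) ^ k) := by ring
      have h6 : (p : ℤ) ^ n ∣ (t : ℤ) * (p : ℤ) ^ k := hcop.dvd_of_dvd_mul_left h5
      have h7 : (p : ℤ) ^ k * (p : ℤ) ^ (n - k) ∣ (p : ℤ) ^ k * (t : ℤ) := by
        calc (p : ℤ) ^ k * (p : ℤ) ^ (n - k) = (p : ℤ) ^ n := by
              rw [← pow_add]; congr 1; omega
          _ ∣ (t : ℤ) * (p : ℤ) ^ k := h6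
          _ = (p : ℤ) ^ k * (t : ℤ) := by ring
      exact (mul_dvd_mul_iff_left (pow_ne_zero k (by exact_mod_cast hp.ne_zero))).mp h7
    have hdvdN : p ^ (n - k) ∣ t := by exact_mod_cast hdvd2
    have hle : p ^ (n - k) ≤ t := Nat.le_of_dvd htpos hdvdN
    omega
  -- conclusion part 1 & 2
  have hsol2 : Mword (List.replicate (2 * p ^ (n - k)) c) = -1 := by
    rw [Mword_replicate, ← hAdef]; exact hmain2
  have hmemset : (2 * p ^ (n - k)) ∈
      {m : ℕ | 0 < m ∧ IsSolutionE (List.replicate m c)} := by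
    constructor
    · have : 1 ≤ p ^ (n - k) := Nat.one_le_pow _ _ hppos
      omega
    · exact Or.inr hsol2
  have hsize : monomialSize (p ^ n) c = 2 * p ^ (n - k) := by
    apply le_antisymm
    · exact Nat.sInf_le hmemset
    · have hne : {m : ℕ | 0 < m ∧ IsSolutionE (List.replicate m c)}.Nonempty := ⟨_, hmemset⟩
      have hmem := Nat.sInf_mem hne
      obtain ⟨hpos, hsol⟩ := hmem
      unfold IsSolutionE at hsol
      rw [Mword_replicate, ← hAdef] at hsol
      exact hLB _ hpos hsol
  refine ⟨hsize, hsol2, ?_⟩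
  -- part 3
  set d : ZMod (p ^ n) := ((2 * a * p ^ (n - 1) : ℤ) : ZMod (p ^ n)) with hddef
  have hx : ((a * p ^ k - 2 * a * p ^ (n - 1) : ℤ) : ZMod (p ^ n)) = c - d := by
    rw [hcdef, hddef]; push_cast; ring
  have hdd : d * d = 0 := by
    rw [hddef, ← Int.cast_mul, ZMod.intCast_zmod_eq_zero_iff_dvd]
    have hexp : (p : ℤ) ^ (n - 1) * (p : ℤ) ^ (n - 1) = (p : ℤ) ^ n * (p : ℤ) ^ (n - 2) := by
      rw [← pow_add, ← pow_add]; congr 1; omega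
    refine ⟨4 * a ^ 2 * (p : ℤ) ^ (n - 2), ?_⟩
    push_cast
    linear_combination 4 * a ^ 2 * hexp
  have hdc : d * c = 0 := by
    rw [hddef, hcdef, ← Int.cast_mul, ZMod.intCast_zmod_eq_zero_iff_dvd]
    have hexp : (p : ℤ) ^ (n - 1) * (p : ℤ) ^ k = (p : ℤ) ^ n * (p : ℤ) ^ (k - 1) := by
      rw [← pow_add, ← pow_add]; congr 1; omega
    refine ⟨2 * a ^ 2 * (p : ℤ) ^ (k - 1), ?_⟩
    push_cast
    linear_combination 2 * a ^ 2 * hexp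
  have ht'c : ((2 * p ^ (n - k - 1) : ℕ) : ZMod (p ^ n)) * c = d := by
    have hZ : ((2 * p ^ (n - k - 1) : ℕ) : ℤ) * (a * (p : ℤ) ^ k) = 2 * a * (p : ℤ) ^ (n - 1) := by
      have hexp : (p : ℤ) ^ (n - k - 1) * (p : ℤ) ^ k = (p : ℤ) ^ (n - 1) := by
        rw [← pow_add]; congr 1; omega
      push_cast
      linear_combination 2 * a * hexp
    calc ((2 * p ^ (n - k - 1) : ℕ) : ZMod (p ^ n)) * c
        = ((((2 * p ^ (n - k - 1) : ℕ) : ℤ) * (a * (p : ℤ) ^ k) : ℤ) : ZMod (p ^ n)) := by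
          rw [hcdef]; push_cast; ring
      _ = ((2 * a * (p : ℤ) ^ (n - 1) : ℤ) : ZMod (p ^ n)) := by rw [hZ]
      _ = d := by rw [hddef]
  have hG3coeff : ∀ j : ℕ, 2 ≤ j →
      (((2 * p ^ (n - k - 1)).choose j : ℕ) : ZMod (p ^ n)) * (-c) ^ j = 0 := by
    intro j hj
    have h0 : (((2 * p ^ (n - k - 1)).choose j * p ^ (j * k) : ℕ) : ZMod (p ^ n)) = 0 := by
      rw [ZMod.natCast_eq_zero_iff]
      exact dvd_case3 hp hodd hk1 hj
    push_cast at h0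
    rw [← hcpdef] at h0
    rw [neg_pow, hcj j]
    calc (((2 * p ^ (n - k - 1)).choose j : ℕ) : ZMod (p ^ n)) *
          ((-1) ^ j * (ca ^ j * cp ^ (j * k)))
        = ((((2 * p ^ (n - k - 1)).choose j : ℕ) : ZMod (p ^ n)) * cp ^ (j * k)) *
            (ca ^ j * (-1) ^ j) := by ring
      _ = 0 * (ca ^ j * (-1) ^ j) := by rw [h0]
      _ = 0 := zero_mul _
  have hG2 : (1 - c • A) ^ (2 * p ^ (n - k - 1)) = 1 - d • A := by
    rw [hAdef, upow_expand, ← hAdef]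
    have ht'2 : 2 ≤ 2 * p ^ (n - k - 1) := by
      have : 1 ≤ p ^ (n - k - 1) := Nat.one_le_pow _ _ hppos
      omega
    rw [Finset.range_eq_Ico,
      ← Finset.sum_Ico_consecutive _ (Nat.zero_le 2) (by omega : 2 ≤ 2 * p ^ (n - k - 1) + 1)]
    have hrest : ∑ j ∈ Finset.Ico 2 (2 * p ^ (n - k - 1) + 1),
        (((2 * p ^ (n - k - 1)).choose j : ZMod (p ^ n)) * (-c) ^ j) • A ^ j = 0 :=
      Finset.sum_eq_zero fun j hj => by
        rw [hG3coeff j (Finset.mem_Ico.mp hj).1, zero_smul]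
    rw [hrest, add_zero, ← Finset.range_eq_Ico, Finset.sum_range_succ, Finset.sum_range_one]
    rw [pow_zero, pow_zero, pow_one, pow_one, Nat.choose_zero_right, Nat.choose_one_right]
    rw [Nat.cast_one, one_mul, one_smul]
    have hcoef : ((2 * p ^ (n - k - 1) : ℕ) : ZMod (p ^ n)) * (-c) = -d := by
      rw [mul_neg, ht'c]
    rw [hcoef, neg_smul, sub_eq_add_neg]
  have hAm : A ^ (4 * p ^ (n - k - 1)) = 1 - d • A := by
    have h4 : 4 * p ^ (n - k - 1) = 2 * (2 * p ^ (n - k - 1)) := by ring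
    have hev4 : Even (2 * p ^ (n - k - 1)) := ⟨p ^ (n - k - 1), by ring⟩
    rw [h4, pow_mul, hA2, hev4.neg_pow, hG2]
  set m : ℕ := 4 * p ^ (n - k - 1) with hmdef
  have hm4 : 4 ≤ m := by
    have : 1 ≤ p ^ (n - k - 1) := Nat.one_le_pow _ _ hppos
    omega
  set E : Matrix (Fin 2) (Fin 2) (ZMod (p ^ n)) := !![1, 0; 0, 0] with hE
  set A' : Matrix (Fin 2) (Fin 2) (ZMod (p ^ n)) := !![0, 1; -1, c] with hA'
  have hAA' : A * A' = 1 := by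
    ext i j
    fin_cases i <;> fin_cases j <;>
      simp [hAdef, hA', genMat, Matrix.mul_apply, Fin.sum_univ_two, Matrix.one_apply]
  have hXE : genMat (c - d) = A - d • E := by
    ext i j
    fin_cases i <;> fin_cases j <;>
      simp [hAdef, hE, genMat, Matrix.sub_apply, Matrix.smul_apply, smul_eq_mul]
  have hdApow : d • A ^ (m - 1) = d • A' := by
    have hm1 : A ^ (m - 1) * A = A ^ m := by rw [← pow_succ]; congr 1; omega
    calc d • A ^ (m - 1) = (d • A ^ (m - 1)) * (A * A') := by rw [hAA', mul_one]
      _ = (d • (A ^ (m - 1) * A)) * A' := by rw [smul_mul_assoc, smul_mul_assoc, mul_assoc]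
      _ = (d • (1 - d • A)) * A' := by rw [hm1, hAm]
      _ = (d • (1 : Matrix (Fin 2) (Fin 2) (ZMod (p ^ n)))) * A' := by
          rw [smul_sub, smul_smul, hdd, zero_smul, sub_zero]
      _ = d • A' := by rw [smul_mul_assoc, one_mul]
  have hfinal : genMat (c - d) * (A ^ (m - 2) * genMat (c - d)) = 1 := by
    rw [hXE]
    have hr1 : A ^ (m - 2) * A = A ^ (m - 1) := by rw [← pow_succ]; congr 1; omega
    have hr2 : A * A ^ (m - 1) = A ^ m := by rw [← pow_succ']; congr 1; omega
    have hsumE : A + (A' * E + E * A') = c • E := by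
      ext i j
      fin_cases i <;> fin_cases j <;>
        simp [hAdef, hA', hE, genMat, Matrix.mul_apply, Fin.sum_univ_two,
          Matrix.add_apply, Matrix.smul_apply, smul_eq_mul]
    have hstep1 : A ^ (m - 2) * (A - d • E) = A ^ (m - 1) - d • (A ^ (m - 2) * E) := by
      rw [mul_sub, hr1, mul_smul_comm]
    rw [hstep1]
    have hr3 : A * A ^ (m - 2) = A ^ (m - 1) := by rw [← pow_succ']; congr 1; omega
    have hp2' : A * (A ^ (m - 2) * E) = A ^ (m - 1) * E := by rw [← mul_assoc, hr3]
    have hexpand : (A - d • E) * (A ^ (m - 1) - d • (A ^ (m - 2) * E))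
        = A * A ^ (m - 1) - d • (A * (A ^ (m - 2) * E))
          - (d • (E * A ^ (m - 1)) - (d * d) • (E * (A ^ (m - 2) * E))) := by
      rw [sub_mul, mul_sub, mul_sub, mul_smul_comm, mul_smul_comm,
        smul_mul_assoc, smul_mul_assoc, smul_smul]
    rw [hexpand, hdd, zero_smul, sub_zero, hr2, hAm, hp2']
    have hq1 : d • (A ^ (m - 1) * E) = d • (A' * E) := by
      rw [← smul_mul_assoc, hdApow, smul_mul_assoc]
    have hq2 : d • (E * A ^ (m - 1)) = d • (E * A') := by
      rw [← mul_smul_comm, hdApow, mul_smul_comm]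
    rw [hq1, hq2]
    have : (1 : Matrix (Fin 2) (Fin 2) (ZMod (p ^ n))) - d • A - d • (A' * E) - d • (E * A')
        = 1 - d • (A + (A' * E + E * A')) := by
      rw [smul_add, smul_add]
      abel
    rw [this, hsumE, smul_smul, hdc, zero_smul, sub_zero]
  rw [hx, Mword_sandwich, ← hAdef]
  exact hfinal
end
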